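/- arXiv:2307.15062 — 7 statements merged into one kernel-verified Lean document; each statement's English description precedes it below -/
import Mathlib

section
/- Let H be an n×n complex Hermitian matrix whose kernel is one-dimensional and spanned by a unit vector ψ₀, let Δ = min{|λ| : λ is a nonzero eigenvalue of H}, let a and b be unit vectors in ℂⁿ with ⟨b, ψ₀⟩·⟨ψ₀, a⟩ ≠ 0, and set τ = 4/(Δ·|⟨b, ψ₀⟩⟨ψ₀, a⟩|). Then the time-averaged transition probability satisfies (1/τ)·∫₀^τ |⟨b, exp(−itH)·a⟩|² dt ≥ (1/4)·|⟨b, ψ₀⟩⟨ψ₀, a⟩|². -/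
open MeasureTheory Matrix

set_option maxHeartbeats 1000000 in
/-- Let `H` be an `n × n` complex Hermitian matrix whose kernel is
one-dimensional and spanned by a unit vector `ψ₀`, let `Δ` be the smallest absolute value of a
nonzero eigenvalue of `H`, let `a`, `b` be unit vectors with `⟨b,ψ₀⟩⟨ψ₀,a⟩ ≠ 0`, and set
`τ = 4 / (Δ * |⟨b,ψ₀⟩⟨ψ₀,a⟩|)`.  Then the time-averaged transition probability satisfies
`(1/τ) ∫₀^τ |⟨b, exp(-itH) a⟩|² dt ≥ (1/4) |⟨b,ψ₀⟩⟨ψ₀,a⟩|²`. -/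
theorem quantum_walk_hitting_lower_bound
    (n : ℕ) (H : Matrix (Fin n) (Fin n) ℂ) (hH : H.IsHermitian)
    (ψ₀ a b : Fin n → ℂ)
    (hψ₀unit : star ψ₀ ⬝ᵥ ψ₀ = 1)
    (hψ₀ker : H.mulVec ψ₀ = 0)
    (hker : ∀ v : Fin n → ℂ, H.mulVec v = 0 → ∃ c : ℂ, v = c • ψ₀)
    (ha : star a ⬝ᵥ a = 1) (hb : star b ⬝ᵥ b = 1)
    (hover : (star b ⬝ᵥ ψ₀) * (star ψ₀ ⬝ᵥ a) ≠ 0)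
    (Δ : ℝ)
    (hΔ : IsLeast {x : ℝ | ∃ i, hH.eigenvalues i ≠ 0 ∧ x = |hH.eigenvalues i|} Δ)
    (τ : ℝ)
    (hτ : τ = 4 / (Δ * ‖(star b ⬝ᵥ ψ₀) * (star ψ₀ ⬝ᵥ a)‖)) :
    (1 / τ) * ∫ t in (0:ℝ)..τ,
        ‖star b ⬝ᵥ (NormedSpace.exp ((-(t : ℂ) * Complex.I) • H)).mulVec a‖ ^ 2
      ≥ (1 / 4) * ‖(star b ⬝ᵥ ψ₀) * (star ψ₀ ⬝ᵥ a)‖ ^ 2 := by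
  classical
  set c : ℂ := (star b ⬝ᵥ ψ₀) * (star ψ₀ ⬝ᵥ a) with hcdef
  set C : ℝ := ‖c‖ with hCdef
  have hCpos : 0 < C := norm_pos_iff.mpr hover
  obtain ⟨⟨i₀, hi₀ne, hi₀eq⟩, hΔlb⟩ := hΔ
  have hΔpos : 0 < Δ := by rw [hi₀eq]; exact abs_pos.mpr hi₀ne
  have hτpos : 0 < τ := by rw [hτ]; positivity
  set U : Matrix (Fin n) (Fin n) ℂ := (hH.eigenvectorUnitary : Matrix (Fin n) (Fin n) ℂ)
    with hUdef
  set lam : Fin n → ℝ := hH.eigenvalues with hlamdef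
  have hUmem := hH.eigenvectorUnitary.2
  rw [Unitary.mem_iff] at hUmem
  have hU2 : star U * U = 1 := hUmem.1
  have hU1 : U * star U = 1 := hUmem.2
  have hinv : U⁻¹ = star U := Matrix.inv_eq_right_inv hU1
  have hUunit : IsUnit U := ⟨⟨U, star U, hU1, hU2⟩, rfl⟩
  -- columns of U
  set u : Fin n → (Fin n → ℂ) := fun k j => U j k with hudef
  set β : Fin n → ℂ := star b ᵥ* U with hβdef
  set α : Fin n → ℂ := star U *ᵥ a with hαdef
  set w : Fin n → ℂ := fun k => β k * α k with hwdef
  have hβeq : ∀ k, β k = star b ⬝ᵥ u k := by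
    intro k; simp [hβdef, hudef, Matrix.vecMul, dotProduct]
  have hαeq : ∀ k, α k = star (u k) ⬝ᵥ a := by
    intro k
    simp [hαdef, hudef, Matrix.mulVec, dotProduct, Matrix.star_apply]
  -- the expansion of the transition amplitude
  have expand : ∀ d : Fin n → ℂ,
      star b ⬝ᵥ (U * diagonal d * star U) *ᵥ a = ∑ k, d k * w k := by
    intro d
    rw [← Matrix.mulVec_mulVec, ← Matrix.mulVec_mulVec, Matrix.dotProduct_mulVec]
    simp only [dotProduct, Matrix.mulVec_diagonal]
    exact Finset.sum_congr rfl fun k _ => by simp [hwdef]; ring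
  -- the exponential formula
  have hexp : ∀ z : ℂ, NormedSpace.exp (z • H) =
      U * diagonal (fun k => Complex.exp (z * (lam k : ℂ))) * star U := by
    intro z
    have hdiag : diagonal (fun k => z * (lam k : ℂ))
        = z • diagonal (RCLike.ofReal ∘ hH.eigenvalues) := by
      have hfun : (fun k => z * (lam k : ℂ)) = z • (RCLike.ofReal ∘ hH.eigenvalues) := by
        funext k
        simp [Function.comp, hlamdef]
      rw [hfun, Matrix.diagonal_smul]
    have h1 : z • H = U * diagonal (fun k => z * (lam k : ℂ)) * U⁻¹ := by
      rw [hinv]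
      conv_lhs => rw [hH.spectral_theorem, Unitary.conjStarAlgAut_apply, ← hUdef]
      rw [hdiag, Matrix.mul_smul, Matrix.smul_mul]
    have h2 : (NormedSpace.exp fun k => z * (lam k : ℂ))
        = fun k => Complex.exp (z * (lam k : ℂ)) := by
      rw [Pi.exp_def]
      funext k
      exact (congrFun Complex.exp_eq_exp_ℂ _).symm
    rw [h1, Matrix.exp_conj U _ hUunit, Matrix.exp_diagonal, h2, hinv]
  -- Parseval-type sums
  have hz2 : ∀ z : ℂ, ((‖z‖^2 : ℝ) : ℂ) = (starRingEnd ℂ) z * z := by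
    intro z
    rw [mul_comm, Complex.mul_conj]
    norm_cast
    simp [Complex.normSq_eq_norm_sq]
  have hnorm_of : ∀ v : Fin n → ℂ,
      (∑ k, (starRingEnd ℂ) (v k) * v k = 1) → ∑ k, ‖v k‖^2 = 1 := by
    intro v hv
    have h1 : ((∑ k, ‖v k‖^2 : ℝ) : ℂ) = 1 := by
      push_cast
      rw [← hv]
      exact Finset.sum_congr rfl fun k _ => by rw [← hz2]; push_cast; ring
    exact_mod_cast h1
  have hβC : ∑ k, (starRingEnd ℂ) (β k) * β k = 1 := by
    have h1 : star β = star U *ᵥ b := by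
      rw [hβdef, Matrix.star_vecMul, star_star, ← Matrix.star_eq_conjTranspose]
    have h2 : star β ⬝ᵥ β = 1 := by
      rw [h1, dotProduct_comm, hβdef, Matrix.dotProduct_mulVec, Matrix.vecMul_vecMul,
        hU1, Matrix.vecMul_one]
      exact hb
    simpa [dotProduct, Pi.star_apply] using h2
  have hαC : ∑ k, (starRingEnd ℂ) (α k) * α k = 1 := by
    have h1 : star α = star a ᵥ* U := by
      rw [hαdef, Matrix.star_mulVec, ← Matrix.star_eq_conjTranspose, star_star]
    have h2 : star α ⬝ᵥ α = 1 := by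
      rw [h1, hαdef, Matrix.dotProduct_mulVec, Matrix.vecMul_vecMul, hU1, Matrix.vecMul_one]
      exact ha
    simpa [dotProduct, Pi.star_apply] using h2
  have hβn : ∑ k, ‖β k‖^2 = 1 := hnorm_of β hβC
  have hαn : ∑ k, ‖α k‖^2 = 1 := hnorm_of α hαC
  have hwsum : ∑ k, ‖w k‖ ≤ 1 := by
    have h := Finset.sum_mul_sq_le_sq_mul_sq Finset.univ (fun k => ‖β k‖) (fun k => ‖α k‖)
    rw [hβn, hαn, mul_one] at h
    have hnn : (0:ℝ) ≤ ∑ k, ‖β k‖ * ‖α k‖ :=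
      Finset.sum_nonneg fun k _ => by positivity
    have h2 : ∑ k, ‖w k‖ = ∑ k, ‖β k‖ * ‖α k‖ :=
      Finset.sum_congr rfl fun k _ => by rw [hwdef]; exact norm_mul _ _
    nlinarith
  -- the zero eigenvalue index
  have hψ₀ne : ψ₀ ≠ 0 := fun h => by simp [h] at hψ₀unit
  set p : Fin n → ℂ := star U *ᵥ ψ₀ with hpdef
  have hψ₀p : U *ᵥ p = ψ₀ := by
    rw [hpdef, Matrix.mulVec_mulVec, hU1, Matrix.one_mulVec]
  have hpne : p ≠ 0 := by
    intro h
    rw [h, Matrix.mulVec_zero] at hψ₀p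
    exact hψ₀ne hψ₀p.symm
  have hdp : ∀ k, (lam k : ℂ) * p k = 0 := by
    have h1 : star U * H = diagonal (RCLike.ofReal ∘ lam) * star U := by
      conv_lhs => rw [hH.spectral_theorem, Unitary.conjStarAlgAut_apply, ← hUdef]
      rw [← Matrix.mul_assoc, ← Matrix.mul_assoc, hU2, Matrix.one_mul]
    have h2 : (diagonal (RCLike.ofReal ∘ lam) * star U) *ᵥ ψ₀ = 0 := by
      rw [← h1, ← Matrix.mulVec_mulVec, hψ₀ker, Matrix.mulVec_zero]
    intro k
    have h3 := congrFun h2 k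
    rw [← Matrix.mulVec_mulVec] at h3
    simpa [Matrix.mulVec_diagonal, Function.comp, hpdef] using h3
  obtain ⟨k₀, hpk₀⟩ := Function.ne_iff.mp hpne
  have hlamk₀ : lam k₀ = 0 := by
    rcases mul_eq_zero.mp (hdp k₀) with h | h
    · exact_mod_cast h
    · exact absurd h hpk₀
  -- columns are eigenvectors
  have hucol : ∀ k, H *ᵥ u k = (lam k : ℝ) • u k := by
    intro k
    have h1 : u k = ⇑(hH.eigenvectorBasis k) := by
      funext j
      exact hH.eigenvectorUnitary_apply j k
    rw [h1]
    exact hH.mulVec_eigenvectorBasis k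
  have horth : ∀ k l, star (u k) ⬝ᵥ u l = if k = l then 1 else 0 := by
    intro k l
    have h := congrFun (congrFun hU2 k) l
    simpa [Matrix.mul_apply, Matrix.one_apply, dotProduct, Matrix.star_apply, hudef] using h
  obtain ⟨c₀, hc₀⟩ := hker (u k₀) (by rw [hucol k₀, hlamk₀, zero_smul])
  have hc₀unit : c₀ * (starRingEnd ℂ) c₀ = 1 := by
    have h := horth k₀ k₀
    rw [if_pos rfl, hc₀] at h
    simpa [star_smul, smul_dotProduct, dotProduct_smul, hψ₀unit,
      smul_eq_mul] using h
  have hc₀ne : c₀ ≠ 0 := by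
    intro h
    rw [h] at hc₀unit
    simp at hc₀unit
  have huniq : ∀ k, lam k = 0 → k = k₀ := by
    intro k hk
    by_contra hne
    obtain ⟨ck, hck⟩ := hker (u k) (by rw [hucol k, hk, zero_smul])
    have hckne : ck ≠ 0 := by
      intro h
      have h1 := horth k k
      rw [if_pos rfl, hck, h] at h1
      simp at h1
    have h2 := horth k k₀
    rw [if_neg hne, hck, hc₀] at h2
    simp only [star_smul, smul_dotProduct, dotProduct_smul, hψ₀unit,
      smul_eq_mul, mul_one] at h2
    rcases mul_eq_zero.mp h2 with h | h
    · exact hc₀ne h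
    · exact hckne (star_eq_zero.mp h)
  have hwk₀ : w k₀ = c := by
    have h1 : w k₀ = (star b ⬝ᵥ u k₀) * (star (u k₀) ⬝ᵥ a) := by
      simp only [hwdef]
      rw [hβeq, hαeq]
    have hc₀unit' : c₀ * star c₀ = 1 := by rw [← starRingEnd_apply]; exact hc₀unit
    rw [h1, hc₀, hcdef]
    simp only [star_smul, smul_dotProduct, dotProduct_smul, smul_eq_mul]
    linear_combination (star b ⬝ᵥ ψ₀) * (star ψ₀ ⬝ᵥ a) * hc₀unit'
  -- the explicit transition amplitude
  set μ : Fin n → ℂ := fun k => -Complex.I * (lam k : ℂ) with hμdef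
  set g : ℝ → ℂ := fun t => ∑ k, Complex.exp (μ k * t) * w k with hgdef
  have hf : ∀ t : ℝ,
      star b ⬝ᵥ (NormedSpace.exp ((-(t:ℂ) * Complex.I) • H)) *ᵥ a = g t := by
    intro t
    rw [hexp, expand, hgdef]
    refine Finset.sum_congr rfl fun k _ => ?_
    have h1 : (-(t:ℂ) * Complex.I) * (lam k : ℂ) = μ k * (t:ℂ) := by
      simp only [hμdef]
      ring
    rw [h1]
  have hgcont : Continuous g := by
    rw [hgdef]
    refine continuous_finset_sum _ fun k _ => ?_
    exact (Complex.continuous_exp.comp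
      (continuous_const.mul Complex.continuous_ofReal)).mul continuous_const
  have hμk₀ : μ k₀ = 0 := by simp [hμdef, hlamk₀]
  have hμne : ∀ k, k ≠ k₀ → μ k ≠ 0 := by
    intro k hk
    have hlk : lam k ≠ 0 := fun h => hk (huniq k h)
    simp only [hμdef]
    exact mul_ne_zero (neg_ne_zero.mpr Complex.I_ne_zero) (by exact_mod_cast hlk)
  have hΔle : ∀ k, k ≠ k₀ → Δ ≤ |lam k| :=
    fun k hk => hΔlb ⟨k, fun h => hk (huniq k h), rfl⟩
  have hIntK : ∀ k, IntervalIntegrable (fun t : ℝ => Complex.exp (μ k * t) * w k)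
      volume 0 τ := by
    intro k
    exact ((Complex.continuous_exp.comp
      (continuous_const.mul Complex.continuous_ofReal)).mul
        continuous_const).intervalIntegrable _ _
  have hint : ∫ t in (0:ℝ)..τ, g t
      = ∑ k, ∫ t in (0:ℝ)..τ, Complex.exp (μ k * t) * w k := by
    simp only [hgdef]
    exact intervalIntegral.integral_finset_sum (fun k _ => hIntK k)
  have hintk₀ : ∫ t in (0:ℝ)..τ, Complex.exp (μ k₀ * t) * w k₀ = (τ:ℂ) * w k₀ := by
    simp only [hμk₀, zero_mul, Complex.exp_zero, one_mul, intervalIntegral.integral_const]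
    simp [Complex.real_smul]
  have hμnorm : ∀ k, ‖μ k‖ = |lam k| := by
    intro k
    simp [hμdef]
  have hbndk : ∀ k, k ≠ k₀ →
      ‖∫ t in (0:ℝ)..τ, Complex.exp (μ k * t) * w k‖ ≤ 2/Δ * ‖w k‖ := by
    intro k hk
    rw [intervalIntegral.integral_mul_const, norm_mul]
    have hmu : μ k ≠ 0 := hμne k hk
    have hbnd1 : ‖∫ t in (0:ℝ)..τ, Complex.exp (μ k * t)‖ ≤ 2/Δ := by
      rw [integral_exp_mul_complex hmu]
      have hn1 : ‖Complex.exp (μ k * (τ:ℂ))‖ = 1 := by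
        have h2 : μ k * (τ:ℂ) = ((-(lam k) * τ : ℝ) : ℂ) * Complex.I := by
          simp only [hμdef]
          push_cast
          ring
        rw [h2]
        exact Complex.norm_exp_ofReal_mul_I _
      have hn0 : ‖Complex.exp (μ k * ((0:ℝ):ℂ))‖ = 1 := by
        norm_num
      have hnum : ‖Complex.exp (μ k * (τ:ℂ)) - Complex.exp (μ k * ((0:ℝ):ℂ))‖ ≤ 2 := by
        calc ‖Complex.exp (μ k * (τ:ℂ)) - Complex.exp (μ k * ((0:ℝ):ℂ))‖
            ≤ ‖Complex.exp (μ k * (τ:ℂ))‖ + ‖Complex.exp (μ k * ((0:ℝ):ℂ))‖ :=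
              norm_sub_le _ _
          _ = 2 := by rw [hn1, hn0]; norm_num
      rw [norm_div, hμnorm]
      calc ‖Complex.exp (μ k * (τ:ℂ)) - Complex.exp (μ k * ((0:ℝ):ℂ))‖ / |lam k|
          ≤ 2 / |lam k| := by gcongr
        _ ≤ 2 / Δ := by gcongr; exact hΔle k hk
    exact mul_le_mul_of_nonneg_right hbnd1 (norm_nonneg _)
  have hsplit : ∫ t in (0:ℝ)..τ, g t = (τ:ℂ) * w k₀
      + ∑ k ∈ Finset.univ.erase k₀, ∫ t in (0:ℝ)..τ, Complex.exp (μ k * t) * w k := by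
    rw [hint, ← Finset.add_sum_erase _ _ (Finset.mem_univ k₀), hintk₀]
  have hSbound : ‖∑ k ∈ Finset.univ.erase k₀,
      ∫ t in (0:ℝ)..τ, Complex.exp (μ k * t) * w k‖ ≤ 2/Δ := by
    calc ‖∑ k ∈ Finset.univ.erase k₀, ∫ t in (0:ℝ)..τ, Complex.exp (μ k * t) * w k‖
        ≤ ∑ k ∈ Finset.univ.erase k₀, ‖∫ t in (0:ℝ)..τ, Complex.exp (μ k * t) * w k‖ :=
          norm_sum_le _ _
      _ ≤ ∑ k ∈ Finset.univ.erase k₀, 2/Δ * ‖w k‖ :=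
          Finset.sum_le_sum fun k hk => hbndk k (Finset.ne_of_mem_erase hk)
      _ = 2/Δ * ∑ k ∈ Finset.univ.erase k₀, ‖w k‖ := by rw [Finset.mul_sum]
      _ ≤ 2/Δ * 1 := by
          refine mul_le_mul_of_nonneg_left ?_ (by positivity)
          calc ∑ k ∈ Finset.univ.erase k₀, ‖w k‖
              ≤ ∑ k, ‖w k‖ := Finset.sum_le_sum_of_subset_of_nonneg
                (Finset.subset_univ _) (fun k _ _ => norm_nonneg _)
            _ ≤ 1 := hwsum
      _ = 2/Δ := mul_one _
  have hτC : τ * C = 4/Δ := by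
    rw [hτ]
    field_simp
  have hlow : τ * C / 2 ≤ ‖∫ t in (0:ℝ)..τ, g t‖ := by
    rw [hsplit]
    set S : ℂ := ∑ k ∈ Finset.univ.erase k₀,
      ∫ t in (0:ℝ)..τ, Complex.exp (μ k * t) * w k with hSdef
    have h1 : ‖(τ:ℂ) * w k₀‖ = τ * C := by
      rw [norm_mul, hwk₀, hCdef, Complex.norm_real, Real.norm_eq_abs, abs_of_pos hτpos]
    have h2 : ‖(τ:ℂ) * w k₀‖ ≤ ‖(τ:ℂ) * w k₀ + S‖ + ‖S‖ := by
      simpa using norm_add_le ((τ:ℂ) * w k₀ + S) (-S)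
    have h3 : τ * C / 2 = τ * C - 2/Δ := by
      rw [hτC]
      ring
    rw [h3]
    have h4 : τ * C - ‖S‖ ≤ ‖(τ:ℂ) * w k₀ + S‖ := by
      rw [← h1]
      linarith
    linarith
  -- Cauchy–Schwarz in time
  have hg1int : IntervalIntegrable (fun t => ‖g t‖) volume 0 τ :=
    hgcont.norm.intervalIntegrable _ _
  have hg2int : IntervalIntegrable (fun t => ‖g t‖^2) volume 0 τ :=
    (hgcont.norm.pow 2).intervalIntegrable _ _
  set J1 := (∫ t in (0:ℝ)..τ, ‖g t‖) with hJ1def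
  set S2 := (∫ t in (0:ℝ)..τ, ‖g t‖^2) with hS2def
  have hJ1norm : ‖∫ t in (0:ℝ)..τ, g t‖ ≤ J1 :=
    intervalIntegral.norm_integral_le_integral_norm hτpos.le
  have hCS : J1^2 ≤ τ * S2 := by
    set m := J1/τ with hm
    have hmτ : m * τ = J1 := by
      rw [hm]
      field_simp
    have h0 : (0:ℝ) ≤ ∫ t in (0:ℝ)..τ, (‖g t‖ - m)^2 :=
      intervalIntegral.integral_nonneg hτpos.le (fun t _ => sq_nonneg _)
    have hexp2 : ∫ t in (0:ℝ)..τ, (‖g t‖ - m)^2 = S2 - 2*m*J1 + m^2*τ := by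
      have h1 : (fun t => (‖g t‖ - m)^2)
          = fun t => (‖g t‖^2 - (2*m)*‖g t‖) + m^2 := by
        funext t
        ring
      rw [h1, intervalIntegral.integral_add (hg2int.sub (hg1int.const_mul (2*m)))
        intervalIntegrable_const,
        intervalIntegral.integral_sub hg2int (hg1int.const_mul (2*m)),
        intervalIntegral.integral_const_mul, intervalIntegral.integral_const]
      simp only [← hJ1def, ← hS2def, smul_eq_mul]
      ring
    rw [hexp2] at h0
    have key : (S2 - 2*m*J1 + m^2*τ)*τ = τ*S2 - J1^2 := by
      rw [← hmτ]
      ring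
    nlinarith [mul_nonneg h0 hτpos.le]
  have hEq : (∫ t in (0:ℝ)..τ,
      ‖star b ⬝ᵥ (NormedSpace.exp ((-(t : ℂ) * Complex.I) • H)).mulVec a‖ ^ 2) = S2 :=
    intervalIntegral.integral_congr (fun t _ => by rw [hf t])
  rw [ge_iff_le, hEq]
  have hJ1low : τ*C/2 ≤ J1 := le_trans hlow hJ1norm
  have h1 : τ^2*C^2/4 ≤ J1^2 := by
    have h0 := mul_self_le_mul_self (show (0:ℝ) ≤ τ*C/2 by positivity) hJ1low
    nlinarith [h0]
  have h2 : τ^2*C^2/4 ≤ τ * S2 := le_trans h1 hCS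
  have h3 : τ*(C^2/4) ≤ S2 := by
    have := (mul_le_mul_iff_right₀ hτpos).mp (by nlinarith : τ*(τ*(C^2/4)) ≤ τ*S2)
    linarith
  rw [one_div τ, inv_mul_eq_div, le_div_iff₀ hτpos]
  nlinarith
end

section
/- Let n ≥ 1, let t₁, …, t_{2n} be nonzero real numbers, let H be the (2n+1)×(2n+1) real symmetric tridiagonal matrix with zero diagonal and off-diagonal entries H_{i,i+1} = H_{i+1,i} = tᵢ, and let ψ ∈ ℝ^{2n+1} be a unit vector with Hψ = 0. Setting T_j = ∏_{k=1}^{j} (t_{2k−1}/t_{2k}) for 0 ≤ j ≤ n (so T₀ = 1), the amplitudes at the two ends satisfy |ψ₁|·|ψ_{2n+1}| ≥ |T_n| / ((n+1)·max_{0 ≤ j ≤ n} T_j²). -/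
/-- The `m × m` real symmetric tridiagonal matrix with zero diagonal and off-diagonal
entries `H_{i,i+1} = H_{i+1,i} = tᵢ` (1-based indexing of the `tᵢ`, so that rows/columns
`0, …, m-1` correspond to indices `1, …, m`). -/
def tridiagMatrix (m : ℕ) (t : ℕ → ℝ) : Matrix (Fin m) (Fin m) ℝ :=
  Matrix.of fun i j =>
    if (i : ℕ) + 1 = (j : ℕ) then t ((i : ℕ) + 1)
    else if (j : ℕ) + 1 = (i : ℕ) then t ((j : ℕ) + 1)
    else 0

lemma row_eval {m : ℕ} (t : ℕ → ℝ) (ψ : Fin m → ℝ) (i : Fin m) :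
    (tridiagMatrix m t).mulVec ψ i =
      (if h : (i : ℕ) + 1 < m then t ((i : ℕ) + 1) * ψ ⟨(i : ℕ) + 1, h⟩ else 0) +
      (if h : 1 ≤ (i : ℕ) then t (i : ℕ) * ψ ⟨(i : ℕ) - 1, by omega⟩ else 0) := by
  have hpt : ∀ j : Fin m, tridiagMatrix m t i j * ψ j =
      (if h : (i : ℕ) + 1 < m then (if j = (⟨(i : ℕ) + 1, h⟩ : Fin m) then t ((i : ℕ) + 1) * ψ j else 0) else 0) +
      (if h : 1 ≤ (i : ℕ) then (if j = (⟨(i : ℕ) - 1, by omega⟩ : Fin m) then t (i : ℕ) * ψ j else 0) else 0) := by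
    intro j
    have hj := j.isLt
    by_cases h1 : (i : ℕ) + 1 = (j : ℕ)
    · have hm : (i : ℕ) + 1 < m := by omega
      have hje : j = (⟨(i : ℕ) + 1, hm⟩ : Fin m) := Fin.ext h1.symm
      simp only [tridiagMatrix, Matrix.of_apply, if_pos h1, dif_pos hm, if_pos hje]
      split_ifs with h2 h3
      · exfalso; rw [Fin.ext_iff] at h3; simp only [Fin.val_mk] at h3; omega
      · ring
      · ring
    · by_cases h2 : (j : ℕ) + 1 = (i : ℕ)
      · have h1le : 1 ≤ (i : ℕ) := by omega
        have hje : j = (⟨(i : ℕ) - 1, by omega⟩ : Fin m) := Fin.ext (by simp only [Fin.val_mk]; omega)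
        simp only [tridiagMatrix, Matrix.of_apply, if_neg h1, if_pos h2, dif_pos h1le, if_pos hje]
        have ht2 : t ((j : ℕ) + 1) = t (i : ℕ) := by rw [h2]
        rw [ht2]
        split_ifs with h3 h4
        · exfalso; rw [Fin.ext_iff] at h4; simp only [Fin.val_mk] at h4; omega
        · ring
        · ring
      · simp only [tridiagMatrix, Matrix.of_apply, if_neg h1, if_neg h2, zero_mul]
        have e1 : ∀ (h : (i : ℕ) + 1 < m), ¬ (j = (⟨(i : ℕ) + 1, h⟩ : Fin m)) := by
          intro h hc; rw [Fin.ext_iff] at hc; simp only [Fin.val_mk] at hc; omega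
        have e2 : ∀ (h : 1 ≤ (i : ℕ)), ¬ (j = (⟨(i : ℕ) - 1, by omega⟩ : Fin m)) := by
          intro h hc; rw [Fin.ext_iff] at hc; simp only [Fin.val_mk] at hc; omega
        have r1 : (if h : (i : ℕ) + 1 < m then (if j = (⟨(i : ℕ) + 1, h⟩ : Fin m) then t ((i : ℕ) + 1) * ψ j else 0) else 0) = 0 := by
          split_ifs with h hc
          · exact absurd hc (e1 h)
          · rfl
          · rfl
        have r2 : (if h : 1 ≤ (i : ℕ) then (if j = (⟨(i : ℕ) - 1, by omega⟩ : Fin m) then t (i : ℕ) * ψ j else 0) else 0) = 0 := by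
          split_ifs with h hc
          · exact absurd hc (e2 h)
          · rfl
          · rfl
        rw [r1, r2]; norm_num
  simp only [Matrix.mulVec, dotProduct]
  rw [Finset.sum_congr rfl (fun j _ => hpt j), Finset.sum_add_distrib]
  congr 1
  · split_ifs with h
    · rw [Finset.sum_ite_eq' Finset.univ]; simp
    · simp
  · split_ifs with h
    · rw [Finset.sum_ite_eq' Finset.univ]; simp
    · simp

/-- For `n ≥ 1`, nonzero `t₁, …, t_{2n}`, and a unit vector `ψ` in the kernel
of the `(2n+1)×(2n+1)` tridiagonal matrix, setting `T_j = ∏_{k=1}^{j} t_{2k-1}/t_{2k}`, the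
endpoint amplitudes satisfy `|ψ₁|·|ψ_{2n+1}| ≥ |T_n| / ((n+1)·max_{0 ≤ j ≤ n} T_j²)`. -/
theorem tridiag_kernel_endpoint_amplitude_bound
    (n : ℕ) (hn : 1 ≤ n) (t : ℕ → ℝ)
    (ht : ∀ k, 1 ≤ k → k ≤ 2 * n → t k ≠ 0)
    (ψ : Fin (2 * n + 1) → ℝ)
    (hunit : ∑ i, ψ i ^ 2 = 1)
    (hker : (tridiagMatrix (2 * n + 1) t).mulVec ψ = 0)
    (T : ℕ → ℝ)
    (hT : ∀ j, T j = ∏ k ∈ Finset.Icc 1 j, t (2 * k - 1) / t (2 * k)) :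
    |ψ 0| * |ψ ⟨2 * n, by omega⟩| ≥
      |T n| / (((n : ℝ) + 1) *
        (Finset.range (n + 1)).sup' (by simp) (fun j => (T j) ^ 2)) := by
  have hrow : ∀ i : Fin (2 * n + 1), (tridiagMatrix (2 * n + 1) t).mulVec ψ i = 0 :=
    fun i => congrFun hker i
  have e0 : ψ 0 = ψ ⟨0, by omega⟩ := by
    have : (0 : Fin (2 * n + 1)) = ⟨0, by omega⟩ := Fin.ext (by simp)
    rw [this]
  -- odd entries vanish
  have hodd : ∀ j : ℕ, ∀ (h : 2 * j + 1 < 2 * n + 1), ψ ⟨2 * j + 1, h⟩ = 0 := by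
    intro j
    induction j with
    | zero =>
      intro h
      have h0 := hrow ⟨0, by omega⟩
      rw [row_eval] at h0
      simp only [Fin.val_mk] at h0
      rw [dif_pos (show 0 + 1 < 2 * n + 1 by omega), dif_neg (by omega)] at h0
      have ht1 : t 1 ≠ 0 := ht 1 le_rfl (by omega)
      have : ψ ⟨0 + 1, by omega⟩ = 0 := by
        rcases mul_eq_zero.mp (by linarith [h0] : t (0 + 1) * ψ ⟨0 + 1, by omega⟩ = 0) with h' | h'
        · exact absurd h' ht1
        · exact h'
      rw [show (⟨2 * 0 + 1, h⟩ : Fin (2 * n + 1)) = ⟨0 + 1, by omega⟩ from Fin.mk_eq_mk.mpr (by omega)]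
      exact this
    | succ j ih =>
      intro h
      have h0 := hrow ⟨2 * j + 2, by omega⟩
      rw [row_eval] at h0
      simp only [Fin.val_mk] at h0
      rw [dif_pos (show 2 * j + 2 + 1 < 2 * n + 1 by omega), dif_pos (by omega)] at h0
      have hprev : ψ ⟨2 * j + 2 - 1, by omega⟩ = 0 := by
        rw [show (⟨2 * j + 2 - 1, by omega⟩ : Fin (2 * n + 1)) = ⟨2 * j + 1, by omega⟩ from
          Fin.mk_eq_mk.mpr (by omega)]
        exact ih (by omega)
      rw [hprev, mul_zero, add_zero] at h0
      have ht3 : t (2 * j + 2 + 1) ≠ 0 := ht (2 * j + 3) (by omega) (by omega)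
      have : ψ ⟨2 * j + 2 + 1, by omega⟩ = 0 := by
        rcases mul_eq_zero.mp h0 with h' | h'
        · exact absurd h' ht3
        · exact h'
      rw [show (⟨2 * (j + 1) + 1, h⟩ : Fin (2 * n + 1)) = ⟨2 * j + 2 + 1, by omega⟩ from
        Fin.mk_eq_mk.mpr (by omega)]
      exact this
  -- even entries
  have heven : ∀ j : ℕ, ∀ (h : 2 * j < 2 * n + 1),
      ψ ⟨2 * j, h⟩ = (-1 : ℝ) ^ j * T j * ψ 0 := by
    intro j
    induction j with
    | zero =>
      intro h
      have hT0 : T 0 = 1 := by rw [hT 0]; simp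
      rw [show (⟨2 * 0, h⟩ : Fin (2 * n + 1)) = ⟨0, by omega⟩ from Fin.mk_eq_mk.mpr (by omega),
        ← e0, hT0]
      ring
    | succ j ih =>
      intro h
      have h0 := hrow ⟨2 * j + 1, by omega⟩
      rw [row_eval] at h0
      simp only [Fin.val_mk] at h0
      rw [dif_pos (show 2 * j + 1 + 1 < 2 * n + 1 by omega), dif_pos (by omega)] at h0
      have hprev : ψ ⟨2 * j + 1 - 1, by omega⟩ = (-1 : ℝ) ^ j * T j * ψ 0 := by
        rw [show (⟨2 * j + 1 - 1, by omega⟩ : Fin (2 * n + 1)) = ⟨2 * j, by omega⟩ from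
          Fin.mk_eq_mk.mpr (by omega)]
        exact ih (by omega)
      rw [hprev] at h0
      have ht2 : t (2 * j + 2) ≠ 0 := ht (2 * j + 2) (by omega) (by omega)
      have hTs : T (j + 1) = T j * (t (2 * j + 1) / t (2 * j + 2)) := by
        rw [hT (j + 1), hT j, Finset.prod_Icc_succ_top (by omega : 1 ≤ j + 1),
          show 2 * (j + 1) - 1 = 2 * j + 1 from by omega,
          show 2 * (j + 1) = 2 * j + 2 from by omega]
      have hstep : ψ ⟨2 * j + 1 + 1, by omega⟩ =
          -(t (2 * j + 1) / t (2 * j + 2)) * ((-1 : ℝ) ^ j * T j * ψ 0) := by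
        have h2 : t (2 * j + 1 + 1) * ψ ⟨2 * j + 1 + 1, by omega⟩ =
            -(t (2 * j + 1) * ((-1 : ℝ) ^ j * T j * ψ 0)) := by linarith [h0]
        have h3 : t (2 * j + 1 + 1) = t (2 * j + 2) := by norm_num
        rw [h3] at h2
        field_simp
        linarith [h2]
      rw [show (⟨2 * (j + 1), h⟩ : Fin (2 * n + 1)) = ⟨2 * j + 1 + 1, by omega⟩ from
        Fin.mk_eq_mk.mpr (by omega), hstep, hTs]
      ring
  -- sum of squares
  have hsum : ∑ j ∈ Finset.range (n + 1), (T j) ^ 2 * (ψ 0) ^ 2 = 1 := by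
    have h1 : ∑ i : Fin (2 * n + 1), ψ i ^ 2 =
        ∑ k ∈ Finset.range (2 * n + 1), (if h : k < 2 * n + 1 then ψ ⟨k, h⟩ ^ 2 else 0) := by
      rw [← Fin.sum_univ_eq_sum_range]
      refine Finset.sum_congr rfl fun i _ => ?_
      rw [dif_pos i.isLt]
    have himg : Finset.image (fun j => 2 * j) (Finset.range (n + 1)) ⊆
        Finset.range (2 * n + 1) := by
      intro k hk
      simp only [Finset.mem_image, Finset.mem_range] at hk ⊢
      obtain ⟨j, hj, rfl⟩ := hk
      omega
    have h2 : ∑ k ∈ Finset.range (2 * n + 1), (if h : k < 2 * n + 1 then ψ ⟨k, h⟩ ^ 2 else 0) =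
        ∑ k ∈ Finset.image (fun j => 2 * j) (Finset.range (n + 1)),
          (if h : k < 2 * n + 1 then ψ ⟨k, h⟩ ^ 2 else 0) := by
      refine (Finset.sum_subset himg ?_).symm
      intro k hk hk2
      simp only [Finset.mem_range] at hk
      simp only [Finset.mem_image, Finset.mem_range] at hk2
      have hodd' : ∃ j, k = 2 * j + 1 := by
        rcases Nat.even_or_odd k with ⟨j, hj⟩ | ⟨j, hj⟩
        · exact absurd ⟨j, by omega, by omega⟩ hk2
        · exact ⟨j, by omega⟩
      obtain ⟨j, rfl⟩ := hodd'
      rw [dif_pos hk, hodd j hk]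
      norm_num
    have h3 : ∑ k ∈ Finset.image (fun j => 2 * j) (Finset.range (n + 1)),
          (if h : k < 2 * n + 1 then ψ ⟨k, h⟩ ^ 2 else 0) =
        ∑ j ∈ Finset.range (n + 1), (T j) ^ 2 * (ψ 0) ^ 2 := by
      rw [Finset.sum_image (by intro a _ b _ hab; simp only at hab; omega)]
      refine Finset.sum_congr rfl fun j hj => ?_
      simp only [Finset.mem_range] at hj
      rw [dif_pos (by omega : 2 * j < 2 * n + 1), heven j (by omega)]
      have : ((-1 : ℝ) ^ j) ^ 2 = 1 := by
        rw [← pow_mul, mul_comm, pow_mul]; norm_num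
      rw [mul_pow, mul_pow, this, one_mul]
    rw [← hunit, h1, h2, h3]
  set M := (Finset.range (n + 1)).sup' (by simp) (fun j => (T j) ^ 2) with hM
  have hT0 : T 0 = 1 := by rw [hT 0]; simp
  have hsup : ∀ j ∈ Finset.range (n + 1), (T j) ^ 2 ≤ M := by
    intro j hj; rw [hM]; exact Finset.le_sup' (fun j => (T j) ^ 2) hj
  have hM1 : (1 : ℝ) ≤ M := by
    have := hsup 0 (Finset.mem_range.mpr (by omega : 0 < n + 1))
    rw [hT0] at this; norm_num at this; exact this
  have hMpos : (0 : ℝ) < M := by linarith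
  have hb : (1 : ℝ) ≤ ((n : ℝ) + 1) * M * (ψ 0) ^ 2 := by
    have hle : ∑ j ∈ Finset.range (n + 1), (T j) ^ 2 * (ψ 0) ^ 2 ≤
        ∑ _j ∈ Finset.range (n + 1), M * (ψ 0) ^ 2 := by
      refine Finset.sum_le_sum fun j hj => ?_
      exact mul_le_mul_of_nonneg_right (hsup j hj) (sq_nonneg _)
    rw [Finset.sum_const, Finset.card_range, nsmul_eq_mul] at hle
    calc (1 : ℝ) = ∑ j ∈ Finset.range (n + 1), (T j) ^ 2 * (ψ 0) ^ 2 := hsum.symm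
      _
        ≤ (↑(n + 1) : ℝ) * (M * (ψ 0) ^ 2) := hle
      _ = ((n : ℝ) + 1) * M * (ψ 0) ^ 2 := by push_cast; ring
  have hend : ψ (⟨2 * n, by omega⟩ : Fin (2 * n + 1)) = (-1 : ℝ) ^ n * T n * ψ 0 :=
    heven n (by omega)
  rw [hend, abs_mul, abs_mul, abs_pow, abs_neg, abs_one, one_pow, one_mul]
  rw [ge_iff_le, div_le_iff₀ (by positivity)]
  have : |T n| * 1 ≤ |T n| * (((n : ℝ) + 1) * M * (ψ 0) ^ 2) :=
    mul_le_mul_of_nonneg_left hb (abs_nonneg _)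
  calc |T n| = |T n| * 1 := by ring
    _ ≤ |T n| * (((n : ℝ) + 1) * M * (ψ 0) ^ 2) := this
    _ = |ψ 0| * (|T n| * |ψ 0|) * (((n : ℝ) + 1) * M) := by
        rw [← sq_abs (ψ 0)]; ring
end

section
/- Let n ≥ 1 and let t₁, …, t_{2n−1} be nonzero real numbers, and let H be the 2n×2n real symmetric tridiagonal matrix with zero diagonal and off-diagonal entries H_{i,i+1} = H_{i+1,i} = tᵢ (indices 1-based). Then H is invertible, H⁻¹ is symmetric, and for all 1 ≤ i < j ≤ 2n: (H⁻¹)_{ij} = (1/tᵢ)·∏_{k=(i+1)/2}^{(j−2)/2} (−t_{2k}/t_{2k+1}) if i is odd and j is even, and (H⁻¹)_{ij} = 0 otherwise. -/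
namespace TridiagAux

noncomputable def E (t : ℕ → ℝ) (a b : ℕ) : ℝ :=
  (1 / t (a + 1)) * ∏ k ∈ Finset.Icc (a / 2 + 1) ((b - 1) / 2), (-(t (2 * k)) / t (2 * k + 1))

noncomputable def Bfun (t : ℕ → ℝ) (a b : ℕ) : ℝ :=
  if Even a ∧ Odd b ∧ a < b then E t a b
  else if Even b ∧ Odd a ∧ b < a then E t b a
  else 0

noncomputable def Binv (m : ℕ) (t : ℕ → ℝ) : Matrix (Fin m) (Fin m) ℝ :=
  Matrix.of fun i j => Bfun t i j

lemma Bfun_pos {t : ℕ → ℝ} {a b : ℕ} (h1 : a % 2 = 0) (h2 : b % 2 = 1) (h3 : a < b) :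
    Bfun t a b = E t a b := by
  rw [Bfun, if_pos ⟨Nat.even_iff.mpr h1, Nat.odd_iff.mpr h2, h3⟩]

lemma Bfun_pos' {t : ℕ → ℝ} {a b : ℕ} (h1 : b % 2 = 0) (h2 : a % 2 = 1) (h3 : b < a) :
    Bfun t a b = E t b a := by
  unfold Bfun
  rw [if_neg, if_pos ⟨Nat.even_iff.mpr h1, Nat.odd_iff.mpr h2, h3⟩]
  rintro ⟨hae, -, -⟩
  rw [Nat.even_iff] at hae
  omega

lemma Bfun_zero {t : ℕ → ℝ} {a b : ℕ} (h : ¬(a % 2 = 0 ∧ b % 2 = 1 ∧ a < b))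
    (h' : ¬(b % 2 = 0 ∧ a % 2 = 1 ∧ b < a)) :
    Bfun t a b = 0 := by
  unfold Bfun
  split_ifs with h1 h2
  · exact absurd ⟨Nat.even_iff.mp h1.1, Nat.odd_iff.mp h1.2.1, h1.2.2⟩ h
  · exact absurd ⟨Nat.even_iff.mp h2.1, Nat.odd_iff.mp h2.2.1, h2.2.2⟩ h'
  · rfl

lemma Bfun_symm (t : ℕ → ℝ) (a b : ℕ) : Bfun t a b = Bfun t b a := by
  unfold Bfun
  by_cases h1 : Even a ∧ Odd b ∧ a < b
  · rw [if_pos h1, if_neg, if_pos h1]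
    rintro ⟨-, -, hlt⟩
    omega
  · by_cases h2 : Even b ∧ Odd a ∧ b < a
    · rw [if_neg h1, if_pos h2, if_pos h2]
    · rw [if_neg h1, if_neg h2, if_neg h2, if_neg h1]

lemma E_empty {t : ℕ → ℝ} {a b : ℕ} (h : (b - 1) / 2 < a / 2 + 1) :
    E t a b = 1 / t (a + 1) := by
  rw [E, Finset.Icc_eq_empty (by omega), Finset.prod_empty, mul_one]

lemma prod_Icc_bot {M : Type*} [CommMonoid M] {m v : ℕ} (h : m ≤ v) (f : ℕ → M) :
    ∏ k ∈ Finset.Icc m v, f k = f m * ∏ k ∈ Finset.Icc (m + 1) v, f k := by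
  rw [← Finset.Ico_add_one_right_eq_Icc, ← Finset.Ico_add_one_right_eq_Icc,
    Finset.prod_eq_prod_Ico_succ_bot (by omega) f]

lemma key (n : ℕ) (hn : 1 ≤ n) (t : ℕ → ℝ)
    (ht : ∀ k, 1 ≤ k → k ≤ 2 * n - 1 → t k ≠ 0) (a c : ℕ) (ha : a < 2 * n) (hc : c < 2 * n) :
    ((if a + 1 < 2 * n then t (a + 1) * Bfun t (a + 1) c else 0)
      + (if 1 ≤ a then t a * Bfun t (a - 1) c else 0))
    = if a = c then 1 else 0 := by
  rcases Nat.mod_two_eq_zero_or_one a with hA | hA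
  · -- a even
    have h1 : a + 1 < 2 * n := by omega
    rw [if_pos h1]
    rcases Nat.mod_two_eq_zero_or_one c with hC | hC
    · -- c even
      rcases Nat.lt_trichotomy c a with hlt | heq | hgt
      · -- c < a, hence c ≤ a - 2, a ≥ 2
        have ha1 : 1 ≤ a := by omega
        rw [if_pos ha1, if_neg (by omega : ¬ a = c)]
        have b1 : Bfun t (a + 1) c = E t c (a + 1) :=
          Bfun_pos' (by omega) (by omega) (by omega)
        have b2 : Bfun t (a - 1) c = E t c (a - 1) :=
          Bfun_pos' (by omega) (by omega) (by omega)
        rw [b1, b2]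
        obtain ⟨r, rfl⟩ : ∃ r, c = 2 * r := ⟨c / 2, by omega⟩
        obtain ⟨s, hs⟩ : ∃ s, a = 2 * s + 2 := ⟨(a - 2) / 2, by omega⟩
        subst hs
        unfold E
        have i1 : 2 * r / 2 + 1 = r + 1 := by omega
        have i2 : (2 * s + 2 + 1 - 1) / 2 = s + 1 := by omega
        have i3 : (2 * s + 2 - 1 - 1) / 2 = s := by omega
        rw [i1, i2, i3, Finset.prod_Icc_succ_top (by omega : r + 1 ≤ s + 1)]
        have i4 : 2 * (s + 1) = 2 * s + 2 := by ring
        rw [i4]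
        have hne : t (2 * s + 2 + 1) ≠ 0 := ht _ (by omega) (by omega)
        have k1 : t (2 * s + 2 + 1) * (-(t (2 * s + 2)) / t (2 * s + 2 + 1))
            = -(t (2 * s + 2)) := by field_simp
        linear_combination
          (1 / t (2 * r + 1) * ∏ k ∈ Finset.Icc (r + 1) s, (-(t (2 * k)) / t (2 * k + 1))) * k1
      · -- c = a
        subst heq
        have hne : t (c + 1) ≠ 0 := ht _ (by omega) (by omega)
        have b1 : Bfun t (c + 1) c = E t c (c + 1) :=
          Bfun_pos' (by omega) (by omega) (by omega)
        have e1 : E t c (c + 1) = 1 / t (c + 1) := E_empty (by omega)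
        rw [b1, e1, if_pos rfl]
        have hz : ∀ _ : 1 ≤ c, Bfun t (c - 1) c = 0 := fun h =>
          Bfun_zero (by omega) (by omega)
        split_ifs with hp
        · rw [hz hp, mul_zero, add_zero]; field_simp
        · rw [add_zero]; field_simp
      · -- c > a, so c ≥ a + 2
        rw [if_neg (by omega : ¬ a = c)]
        have z1 : Bfun t (a + 1) c = 0 := Bfun_zero (by omega) (by omega)
        rw [z1, mul_zero, zero_add]
        split_ifs with hp
        · have z2 : Bfun t (a - 1) c = 0 := Bfun_zero (by omega) (by omega)
          rw [z2, mul_zero]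
        · rfl
    · -- c odd, a even : everything vanishes
      rw [if_neg (by omega : ¬ a = c)]
      have z1 : Bfun t (a + 1) c = 0 := Bfun_zero (by omega) (by omega)
      rw [z1, mul_zero, zero_add]
      split_ifs with hp
      · have z2 : Bfun t (a - 1) c = 0 := Bfun_zero (by omega) (by omega)
        rw [z2, mul_zero]
      · rfl
  · -- a odd
    have ha1 : 1 ≤ a := by omega
    rw [if_pos ha1]
    rcases Nat.mod_two_eq_zero_or_one c with hC | hC
    · -- c even : everything vanishes
      rw [if_neg (by omega : ¬ a = c)]
      have z1 : Bfun t (a + 1) c = 0 := Bfun_zero (by omega) (by omega)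
      have z2 : Bfun t (a - 1) c = 0 := Bfun_zero (by omega) (by omega)
      rw [z1, z2, mul_zero, mul_zero, add_zero]
      split_ifs <;> rfl
    · -- c odd
      rcases Nat.lt_trichotomy c a with hlt | heq | hgt
      · -- c < a : everything vanishes
        rw [if_neg (by omega : ¬ a = c)]
        have z1 : Bfun t (a + 1) c = 0 := Bfun_zero (by omega) (by omega)
        have z2 : Bfun t (a - 1) c = 0 := Bfun_zero (by omega) (by omega)
        rw [z1, z2, mul_zero, mul_zero, add_zero]
        split_ifs <;> rfl
      · -- c = a
        subst heq
        have hne : t c ≠ 0 := ht _ (by omega) (by omega)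
        have b2 : Bfun t (c - 1) c = E t (c - 1) c :=
          Bfun_pos (by omega) (by omega) (by omega)
        have e2 : E t (c - 1) c = 1 / t (c - 1 + 1) := E_empty (by omega)
        have e1 : c - 1 + 1 = c := by omega
        rw [b2, e2, e1, if_pos rfl]
        have hz : Bfun t (c + 1) c = 0 := Bfun_zero (by omega) (by omega)
        rw [hz, mul_zero]
        split_ifs <;> · rw [zero_add]; field_simp
      · -- c > a, so c ≥ a + 2
        have h1 : a + 1 < 2 * n := by omega
        rw [if_pos h1, if_neg (by omega : ¬ a = c)]
        have b1 : Bfun t (a + 1) c = E t (a + 1) c :=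
          Bfun_pos (by omega) (by omega) (by omega)
        have b2 : Bfun t (a - 1) c = E t (a - 1) c :=
          Bfun_pos (by omega) (by omega) (by omega)
        rw [b1, b2]
        obtain ⟨u, hu⟩ : ∃ u, a = 2 * u + 1 := ⟨(a - 1) / 2, by omega⟩
        obtain ⟨v, rfl⟩ : ∃ v, c = 2 * v + 1 := ⟨(c - 1) / 2, by omega⟩
        subst hu
        unfold E
        have i1 : (2 * u + 1 + 1) / 2 + 1 = u + 2 := by omega
        have i2 : (2 * v + 1 - 1) / 2 = v := by omega
        have i3 : (2 * u + 1 - 1) / 2 + 1 = u + 1 := by omega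
        have i4 : 2 * u + 1 - 1 + 1 = 2 * u + 1 := by omega
        have i5 : 2 * u + 1 + 1 + 1 = 2 * u + 3 := by omega
        rw [i1, i2, i3, i4, i5, prod_Icc_bot (by omega : u + 1 ≤ v)]
        have i6 : 2 * (u + 1) = 2 * u + 2 := by ring
        have i7 : 2 * u + 2 + 1 = 2 * u + 3 := by omega
        have i8 : 2 * u + 1 + 1 = 2 * u + 2 := by omega
        rw [i6, i7, i8]
        have hne1 : t (2 * u + 1) ≠ 0 := ht _ (by omega) (by omega)
        have k1 : t (2 * u + 1) * (1 / t (2 * u + 1)) = 1 := by field_simp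
        linear_combination
          ((-(t (2 * u + 2)) / t (2 * u + 3))
            * ∏ k ∈ Finset.Icc (u + 2) v, (-(t (2 * k)) / t (2 * k + 1))) * k1

lemma mul_eq_one (n : ℕ) (hn : 1 ≤ n) (t : ℕ → ℝ)
    (ht : ∀ k, 1 ≤ k → k ≤ 2 * n - 1 → t k ≠ 0) :
    tridiagMatrix (2 * n) t * Binv (2 * n) t = 1 := by
  ext a c
  rw [Matrix.mul_apply, Matrix.one_apply]
  have step : ∀ b : Fin (2 * n), tridiagMatrix (2 * n) t a b * Binv (2 * n) t b c
      = (if (a : ℕ) + 1 = (b : ℕ) then t ((a : ℕ) + 1) * Bfun t (b : ℕ) (c : ℕ) else 0)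
        + (if (b : ℕ) + 1 = (a : ℕ) then t ((b : ℕ) + 1) * Bfun t (b : ℕ) (c : ℕ) else 0) := by
    intro b
    show (if (a : ℕ) + 1 = (b : ℕ) then t ((a : ℕ) + 1)
        else if (b : ℕ) + 1 = (a : ℕ) then t ((b : ℕ) + 1) else 0) * Bfun t b c = _
    split_ifs <;> first | ring1 | (exfalso; omega)
  rw [Finset.sum_congr rfl (fun b _ => step b), Finset.sum_add_distrib]
  rw [Fin.sum_univ_eq_sum_range
    (fun x => if (a : ℕ) + 1 = x then t ((a : ℕ) + 1) * Bfun t x (c : ℕ) else 0) (2 * n)]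
  rw [Fin.sum_univ_eq_sum_range
    (fun x => if x + 1 = (a : ℕ) then t (x + 1) * Bfun t x (c : ℕ) else 0) (2 * n)]
  rw [Finset.sum_ite_eq (Finset.range (2 * n)) ((a : ℕ) + 1)
    (fun x => t ((a : ℕ) + 1) * Bfun t x (c : ℕ))]
  have hsum2 : (∑ x ∈ Finset.range (2 * n),
      if x + 1 = (a : ℕ) then t (x + 1) * Bfun t x (c : ℕ) else 0)
      = if 1 ≤ (a : ℕ) then t (a : ℕ) * Bfun t ((a : ℕ) - 1) (c : ℕ) else 0 := by
    rcases Nat.eq_zero_or_pos (a : ℕ) with h0 | hpos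
    · rw [if_neg (by omega)]
      exact Finset.sum_eq_zero (fun x _ => if_neg (by omega))
    · obtain ⟨k, hk⟩ : ∃ k, (a : ℕ) = k + 1 := ⟨(a : ℕ) - 1, by omega⟩
      rw [if_pos (by omega : 1 ≤ (a : ℕ)), hk]
      have hcg : ∀ x ∈ Finset.range (2 * n),
          (if x + 1 = k + 1 then t (x + 1) * Bfun t x (c : ℕ) else 0)
          = (if x = k then t (x + 1) * Bfun t x (c : ℕ) else 0) := by
        intro x _
        simp only [Nat.add_right_cancel_iff]
      rw [Finset.sum_congr rfl hcg,
        Finset.sum_ite_eq' (Finset.range (2 * n)) k (fun x => t (x + 1) * Bfun t x (c : ℕ)),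
        if_pos (Finset.mem_range.mpr (by omega : k < 2 * n))]
      simp
  rw [hsum2]
  simp only [Finset.mem_range, Fin.ext_iff]
  exact key n hn t ht a c a.isLt c.isLt

end TridiagAux

open TridiagAux in
/-- For `n ≥ 1` and nonzero `t₁, …, t_{2n-1}`, the `2n × 2n` tridiagonal
matrix `H` is invertible, `H⁻¹` is symmetric, and for `1 ≤ i < j ≤ 2n` (1-based) the entry
`(H⁻¹)_{ij}` equals `(1/tᵢ)·∏_{k=(i+1)/2}^{(j-2)/2} (-t_{2k}/t_{2k+1})` when `i` is odd and
`j` is even, and `0` otherwise. -/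
theorem tridiag_even_inverse_formula
    (n : ℕ) (hn : 1 ≤ n) (t : ℕ → ℝ)
    (ht : ∀ k, 1 ≤ k → k ≤ 2 * n - 1 → t k ≠ 0) :
    IsUnit (tridiagMatrix (2 * n) t) ∧
    (tridiagMatrix (2 * n) t)⁻¹.IsSymm ∧
    ∀ i j : ℕ, (hi : 1 ≤ i) → (hij : i < j) → (hj : j ≤ 2 * n) →
      (tridiagMatrix (2 * n) t)⁻¹ ⟨i - 1, by omega⟩ ⟨j - 1, by omega⟩ =
        if Odd i ∧ Even j then
          (1 / t i) *
            ∏ k ∈ Finset.Icc ((i + 1) / 2) ((j - 2) / 2), (-(t (2 * k)) / t (2 * k + 1))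
        else 0 := by
  have hmul := mul_eq_one n hn t ht
  have hinv : (tridiagMatrix (2 * n) t)⁻¹ = Binv (2 * n) t := Matrix.inv_eq_right_inv hmul
  refine ⟨(Matrix.isUnit_iff_isUnit_det _).mpr (Matrix.isUnit_det_of_right_inverse hmul),
    ?_, ?_⟩
  · rw [hinv, Matrix.IsSymm]
    ext i j
    simp only [Matrix.transpose_apply]
    exact Bfun_symm t _ _
  · intro i j hi hij hj
    rw [hinv]
    show Bfun t (i - 1) (j - 1) = _
    by_cases hcase : Odd i ∧ Even j
    · rw [if_pos hcase]
      have hi2 : i % 2 = 1 := Nat.odd_iff.mp hcase.1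
      have hj2 : j % 2 = 0 := Nat.even_iff.mp hcase.2
      have b1 : Bfun t (i - 1) (j - 1) = E t (i - 1) (j - 1) :=
        Bfun_pos (by omega) (by omega) (by omega)
      rw [b1, E]
      have e1 : i - 1 + 1 = i := by omega
      have e2 : (i - 1) / 2 + 1 = (i + 1) / 2 := by omega
      have e3 : (j - 1 - 1) / 2 = (j - 2) / 2 := by omega
      rw [e1, e2, e3]
    · rw [if_neg hcase]
      have hpar : ¬(i % 2 = 1 ∧ j % 2 = 0) := fun ⟨x, y⟩ =>
        hcase ⟨Nat.odd_iff.mpr x, Nat.even_iff.mpr y⟩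
      exact Bfun_zero (by omega) (by omega)
end

section
/- Let n ≥ 1 and let t₁, …, t_{2n−1} be positive real numbers with tᵢ ≥ c for all i, where c > 0, and suppose that every partial product ∏_{k=a}^{b} (t_{2k}/t_{2k+1}) with 1 ≤ a ≤ b ≤ n−1 is at most B, where B ≥ 1. Let H be the 2n×2n real symmetric tridiagonal matrix with zero diagonal and off-diagonal entries H_{i,i+1} = H_{i+1,i} = tᵢ. Then every eigenvalue λ of H satisfies |λ| ≥ c/(√(2n)·n·B). -/
section TridiagAux

lemma tridiag_icc_insert_left {p q : ℕ} (h : p ≤ q) :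
    Finset.Icc p q = insert p (Finset.Icc (p+1) q) := by
  ext x; simp [Finset.mem_Icc]; omega

lemma tridiag_icc_insert_right {a b : ℕ} (h1 : a ≤ b) (h2 : 1 ≤ b) :
    Finset.Icc a b = insert b (Finset.Icc a (b-1)) := by
  ext x; simp [Finset.mem_Icc]; omega

/-- Formula for the odd-indexed entries of a vector in the kernel-type recurrence. -/
lemma tridiag_claimA (n : ℕ) (hn : 1 ≤ n) (t w : ℕ → ℝ) (lam : ℝ)
    (htpos : ∀ k, 1 ≤ k → k ≤ 2*n-1 → 0 < t k)
    (hwtop : w (2*n+1) = 0)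
    (hrow : ∀ i, 1 ≤ i → i ≤ 2*n → t (i-1) * w (i-1) + t i * w (i+1) = lam * w i) :
    ∀ d p, p + d = n → 1 ≤ p →
      w (2*p-1) = lam * ∑ q ∈ Finset.Icc p n,
        ((-1:ℝ)^(q-p) * ((∏ m ∈ Finset.Icc p (q-1), t (2*m)/t (2*m+1)) / t (2*p-1)) * w (2*q)) := by
  intro d
  induction d with
  | zero =>
      intro p hp hp1
      have hpn : p = n := by omega
      subst hpn
      have hr := hrow (2*p) (by omega) (by omega)
      have ht : 0 < t (2*p-1) := htpos _ (by omega) (by omega)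
      rw [hwtop] at hr
      rw [Finset.Icc_self, Finset.sum_singleton]
      have : Finset.Icc p (p-1) = ∅ := by
        apply Finset.Icc_eq_empty; omega
      rw [Nat.sub_self, pow_zero, this, Finset.prod_empty]
      field_simp
      linarith [hr]
  | succ d ih =>
      intro p hp hp1
      have hpn : p + 1 ≤ n := by omega
      have IH := ih (p+1) (by omega) (by omega)
      have hr := hrow (2*p) (by omega) (by omega)
      have ht1 : 0 < t (2*p-1) := htpos _ (by omega) (by omega)
      have ht2 : 0 < t (2*p+1) := htpos _ (by omega) (by omega)
      rw [show 2*(p+1)-1 = 2*p+1 from by omega] at IH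
      rw [tridiag_icc_insert_left (by omega : p ≤ n), Finset.sum_insert (by simp)]
      have hsum : ∑ q ∈ Finset.Icc (p+1) n,
          ((-1:ℝ)^(q-p) * ((∏ m ∈ Finset.Icc p (q-1), t (2*m)/t (2*m+1)) / t (2*p-1)) * w (2*q))
          = -(t (2*p) / t (2*p-1)) * ∑ q ∈ Finset.Icc (p+1) n,
          ((-1:ℝ)^(q-(p+1)) * ((∏ m ∈ Finset.Icc (p+1) (q-1), t (2*m)/t (2*m+1)) / t (2*p+1)) * w (2*q)) := by
        rw [Finset.mul_sum]
        apply Finset.sum_congr rfl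
        intro q hq
        rw [Finset.mem_Icc] at hq
        rw [show q - p = (q - (p+1)) + 1 from by omega, pow_succ]
        rw [tridiag_icc_insert_left (by omega : p ≤ q-1), Finset.prod_insert (by simp)]
        field_simp
      rw [hsum, mul_add, show lam * (-(t (2*p) / t (2*p-1)) * ∑ q ∈ Finset.Icc (p+1) n,
          ((-1:ℝ)^(q-(p+1)) * ((∏ m ∈ Finset.Icc (p+1) (q-1), t (2*m)/t (2*m+1)) / t (2*p+1)) * w (2*q)))
          = -(t (2*p) / t (2*p-1)) * (lam * ∑ q ∈ Finset.Icc (p+1) n,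
          ((-1:ℝ)^(q-(p+1)) * ((∏ m ∈ Finset.Icc (p+1) (q-1), t (2*m)/t (2*m+1)) / t (2*p+1)) * w (2*q))) from by ring,
        ← IH]
      rw [Nat.sub_self, pow_zero, Finset.Icc_eq_empty (by omega), Finset.prod_empty]
      field_simp
      linarith [hr]

/-- Formula for the even-indexed entries. -/
lemma tridiag_claimB (n : ℕ) (hn : 1 ≤ n) (t w : ℕ → ℝ) (lam : ℝ)
    (htpos : ∀ k, 1 ≤ k → k ≤ 2*n-1 → 0 < t k)
    (hw0 : w 0 = 0)
    (hrow : ∀ i, 1 ≤ i → i ≤ 2*n → t (i-1) * w (i-1) + t i * w (i+1) = lam * w i) :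
    ∀ p, 1 ≤ p → p ≤ n →
      w (2*p) = lam * ∑ q ∈ Finset.Icc 1 p,
        ((-1:ℝ)^(p-q) * ((∏ m ∈ Finset.Icc q (p-1), t (2*m)/t (2*m+1)) / t (2*q-1)) * w (2*q-1)) := by
  intro p hp1
  induction p, hp1 using Nat.le_induction with
  | base =>
      intro hpn
      have hr := hrow 1 (by omega) (by omega)
      rw [hw0] at hr
      have ht : 0 < t 1 := htpos _ (by omega) (by omega)
      norm_num at hr ⊢
      field_simp
      linarith [hr]
  | succ p hp1 ih =>
      intro hpn
      have IH := ih (by omega)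
      have hr := hrow (2*p+1) (by omega) (by omega)
      have ht1 : 0 < t (2*p+1) := htpos _ (by omega) (by omega)
      norm_num at hr
      set S := ∑ q ∈ Finset.Icc 1 p,
        ((-1:ℝ)^(p-q) * ((∏ m ∈ Finset.Icc q (p-1), t (2*m)/t (2*m+1)) / t (2*q-1)) * w (2*q-1)) with hSdef
      rw [tridiag_icc_insert_right (by omega : 1 ≤ p+1) (by omega : 1 ≤ p+1),
        Finset.sum_insert (by simp), show p+1-1 = p from rfl]
      have hsum : ∑ q ∈ Finset.Icc 1 p,
          ((-1:ℝ)^(p+1-q) * ((∏ m ∈ Finset.Icc q p, t (2*m)/t (2*m+1)) / t (2*q-1)) * w (2*q-1))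
          = -(t (2*p) / t (2*p+1)) * ∑ q ∈ Finset.Icc 1 p,
          ((-1:ℝ)^(p-q) * ((∏ m ∈ Finset.Icc q (p-1), t (2*m)/t (2*m+1)) / t (2*q-1)) * w (2*q-1)) := by
        rw [Finset.mul_sum]
        apply Finset.sum_congr rfl
        intro q hq
        rw [Finset.mem_Icc] at hq
        rw [show p + 1 - q = (p - q) + 1 from by omega, pow_succ]
        rw [tridiag_icc_insert_right (by omega : q ≤ p) (by omega : 1 ≤ p),
          Finset.prod_insert (by simp [Finset.mem_Icc]; omega)]
        field_simp
      rw [hsum, ← hSdef]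
      rw [Nat.sub_self, pow_zero, Finset.Icc_eq_empty (by omega : ¬ (p+1 ≤ p)), Finset.prod_empty]
      rw [show 2*(p+1)-1 = 2*p+1 from by omega, show 2*(p+1) = 2*p+1+1 from by omega]
      have ht1' : t (2*p+1) ≠ 0 := ne_of_gt ht1
      field_simp
      linear_combination hr - t (2*p) * IH

end TridiagAux


lemma tridiag_row (m : ℕ) (t : ℕ → ℝ) (v : Fin m → ℝ) (i : ℕ) (h1 : 1 ≤ i) (h2 : i ≤ m) :
    ((tridiagMatrix m t).mulVec v) ⟨i-1, by omega⟩
      = t (i-1) * (if h : 2 ≤ i then v ⟨i-2, by omega⟩ else 0)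
        + t i * (if h : i+1 ≤ m then v ⟨i, by omega⟩ else 0) := by
  simp only [Matrix.mulVec, dotProduct, tridiagMatrix, Matrix.of_apply]
  have hsplit : ∀ k : Fin m,
      (if (i-1) + 1 = (k:ℕ) then t ((i-1) + 1)
        else if (k:ℕ) + 1 = i - 1 then t ((k:ℕ) + 1) else 0) * v k
      = (if (k:ℕ) + 1 = i - 1 then t ((k:ℕ) + 1) * v k else 0)
        + (if (i-1) + 1 = (k:ℕ) then t ((i-1)+1) * v k else 0) := by
    intro k
    by_cases hA : (i-1) + 1 = (k:ℕ)
    · rw [if_pos hA, if_neg (by omega), if_pos hA]; ring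
    · rw [if_neg hA, if_neg hA]
      by_cases hBc : (k:ℕ) + 1 = i - 1
      · rw [if_pos hBc, if_pos hBc]; ring
      · rw [if_neg hBc, if_neg hBc]; ring
  rw [Finset.sum_congr rfl (fun k _ => hsplit k), Finset.sum_add_distrib]
  congr 1
  · by_cases hi2 : 2 ≤ i
    · rw [dif_pos hi2]
      have hiff : ∀ k : Fin m, ((k:ℕ) + 1 = i - 1) = (k = ⟨i-2, by omega⟩) := by
        intro k
        apply propext
        constructor
        · intro h; apply Fin.ext; simp; omega
        · intro h; subst h; simp; omega
      simp only [hiff]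
      rw [Finset.sum_ite_eq' Finset.univ (⟨i-2, by omega⟩ : Fin m)
        (fun k => t ((k:ℕ)+1) * v k)]
      simp only [Finset.mem_univ, if_pos]
      rw [show i - 2 + 1 = i - 1 from by omega]
    · rw [dif_neg hi2]
      rw [Finset.sum_eq_zero, mul_zero]
      intro k _
      rw [if_neg (by omega)]
  · by_cases him : i + 1 ≤ m
    · rw [dif_pos him]
      have hiff : ∀ k : Fin m, ((i-1) + 1 = (k:ℕ)) = (k = ⟨i, by omega⟩) := by
        intro k
        apply propext
        constructor
        · intro h; apply Fin.ext; simp; omega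
        · intro h; subst h; simp; omega
      simp only [hiff]
      rw [Finset.sum_ite_eq' Finset.univ (⟨i, by omega⟩ : Fin m)
        (fun k => t ((i-1)+1) * v k)]
      simp only [Finset.mem_univ, if_pos]
      rw [show i - 1 + 1 = i from by omega]
    · rw [dif_neg him]
      rw [Finset.sum_eq_zero, mul_zero]
      intro k _
      rw [if_neg (by omega)]

/-- For `n ≥ 1` and positive `t₁, …, t_{2n-1}` with `tᵢ ≥ c > 0`, if every
partial product `∏_{k=a}^{b} t_{2k}/t_{2k+1}` with `1 ≤ a ≤ b ≤ n-1` is at most `B ≥ 1`,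
then every eigenvalue `λ` of the `2n × 2n` tridiagonal matrix satisfies
`|λ| ≥ c / (√(2n)·n·B)`. -/

theorem tridiag_even_eigenvalue_lower_bound
    (n : ℕ) (hn : 1 ≤ n) (c B : ℝ) (hc : 0 < c) (hB : 1 ≤ B)
    (t : ℕ → ℝ)
    (htpos : ∀ k, 1 ≤ k → k ≤ 2 * n - 1 → 0 < t k)
    (htc : ∀ k, 1 ≤ k → k ≤ 2 * n - 1 → c ≤ t k)
    (hprod : ∀ a b : ℕ, 1 ≤ a → a ≤ b → b ≤ n - 1 →
      ∏ k ∈ Finset.Icc a b, t (2 * k) / t (2 * k + 1) ≤ B)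
    (lam : ℝ)
    (hlam : Module.End.HasEigenvalue (Matrix.toLin' (tridiagMatrix (2 * n) t)) lam) :
    c / (Real.sqrt (2 * n) * n * B) ≤ |lam| := by
  classical
  obtain ⟨v, hv⟩ := hlam.exists_hasEigenvector
  have hv0 : v ≠ 0 := hv.right
  have hveq : (tridiagMatrix (2*n) t).mulVec v = lam • v := by
    have h := hv.apply_eq_smul
    rwa [Matrix.toLin'_apply] at h
  set w : ℕ → ℝ := fun k => if h : 1 ≤ k ∧ k ≤ 2*n then v ⟨k-1, by omega⟩ else 0 with hw
  have hw0 : w 0 = 0 := by simp [hw]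
  have hwtop : w (2*n+1) = 0 := by
    simp only [hw]; rw [dif_neg (by omega)]
  have hwv : ∀ (k : ℕ) (h1 : 1 ≤ k) (h2 : k ≤ 2*n), w k = v ⟨k-1, by omega⟩ := by
    intro k h1 h2
    simp only [hw]; rw [dif_pos ⟨h1, h2⟩]
  have hrow : ∀ i, 1 ≤ i → i ≤ 2*n → t (i-1) * w (i-1) + t i * w (i+1) = lam * w i := by
    intro i h1 h2
    have h := congrFun hveq ⟨i-1, by omega⟩
    rw [tridiag_row (2*n) t v i h1 h2, Pi.smul_apply, smul_eq_mul] at h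
    have e1 : (if h : 2 ≤ i then v ⟨i-2, by omega⟩ else 0) = w (i-1) := by
      by_cases h' : 2 ≤ i
      · rw [dif_pos h', hwv (i-1) (by omega) (by omega)]
        exact congrArg v (Fin.ext (show i - 2 = i - 1 - 1 from by omega))
      · rw [dif_neg h', show i - 1 = 0 from by omega, hw0]
    have e2 : (if h : i+1 ≤ 2*n then v ⟨i, by omega⟩ else 0) = w (i+1) := by
      by_cases h' : i+1 ≤ 2*n
      · rw [dif_pos h', hwv (i+1) (by omega) (by omega)]
        exact congrArg v (Fin.ext (show i = i + 1 - 1 from by omega))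
      · rw [dif_neg h', show i + 1 = 2*n+1 from by omega, hwtop]
    rw [e1, e2] at h
    rw [hwv i h1 h2]
    exact h
  -- choose max component
  obtain ⟨i0, -, hmax⟩ := Finset.exists_max_image Finset.univ (fun i => |v i|)
    ⟨⟨0, by omega⟩, Finset.mem_univ _⟩
  set M := |v i0| with hM
  have hMpos : 0 < M := by
    obtain ⟨j, hj⟩ : ∃ j, v j ≠ 0 := by
      by_contra h
      push_neg at h
      exact hv0 (funext fun j => h j)
    exact lt_of_lt_of_le (abs_pos.mpr hj) (hmax j (Finset.mem_univ j))
  have hwM : ∀ k, |w k| ≤ M := by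
    intro k
    simp only [hw]
    by_cases h : 1 ≤ k ∧ k ≤ 2*n
    · rw [dif_pos h]; exact hmax _ (Finset.mem_univ _)
    · rw [dif_neg h]; simpa using hMpos.le
  -- coefficient bound
  have hcoef : ∀ a b : ℕ, 1 ≤ a → a ≤ b → b ≤ n →
      (∏ m ∈ Finset.Icc a (b-1), t (2*m) / t (2*m+1)) ≤ B := by
    intro a b ha hab hbn
    by_cases h : a ≤ b - 1
    · exact hprod a (b-1) ha h (by omega)
    · rw [Finset.Icc_eq_empty (by omega), Finset.prod_empty]; exact hB
  have hcoefpos : ∀ a b : ℕ, 1 ≤ a → b ≤ n →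
      0 ≤ (∏ m ∈ Finset.Icc a (b-1), t (2*m) / t (2*m+1)) := by
    intro a b ha hbn
    apply Finset.prod_nonneg
    intro m hm
    rw [Finset.mem_Icc] at hm
    have h1 := htpos (2*m) (by omega) (by omega)
    have h2 := htpos (2*m+1) (by omega) (by omega)
    positivity
  have hi0lt : (i0:ℕ) < 2*n := i0.isLt
  have hwj0 : w ((i0:ℕ)+1) = v i0 := by
    rw [hwv ((i0:ℕ)+1) (by omega) (by omega)]
    exact congrArg v (Fin.ext (show (i0:ℕ)+1-1 = (i0:ℕ) from by omega))
  have hBcM : (0:ℝ) ≤ B / c * M := by positivity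
  have hkey : M ≤ |lam| * (↑n * (B / c * M)) := by
    rcases Nat.even_or_odd ((i0:ℕ)+1) with he | ho
    · -- even index : use claim B
      obtain ⟨p, hpe⟩ := he
      have hp1 : 1 ≤ p := by omega
      have hpn : p ≤ n := by omega
      have hj : (i0:ℕ)+1 = 2*p := by omega
      have hF := tridiag_claimB n hn t w lam htpos hw0 hrow p hp1 hpn
      have hM' : M = |w (2*p)| := by rw [← hj, hwj0]
      have h0 : M = |lam| * |∑ q ∈ Finset.Icc 1 p,
          ((-1:ℝ)^(p-q) * ((∏ m ∈ Finset.Icc q (p-1), t (2*m)/t (2*m+1)) / t (2*q-1)) * w (2*q-1))| := by rw [hM', hF, abs_mul]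
      refine le_trans (le_of_eq h0) ?_
      apply mul_le_mul_of_nonneg_left _ (abs_nonneg lam)
      refine le_trans (Finset.abs_sum_le_sum_abs _ _) ?_
      refine le_trans (Finset.sum_le_sum (g := fun _ => B / c * M) (fun q hq => ?_)) ?_
      · rw [Finset.mem_Icc] at hq
        rw [abs_mul, abs_mul, abs_pow, abs_neg, abs_one, one_pow, one_mul]
        have hP := hcoef q p hq.1 hq.2 hpn
        have hPpos := hcoefpos q p hq.1 hpn
        have htq := htc (2*q-1) (by omega) (by omega)
        rw [abs_of_nonneg (div_nonneg hPpos (le_trans hc.le htq))]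
        exact mul_le_mul (div_le_div₀ (by linarith : (0:ℝ) ≤ B) hP hc htq)
          (hwM _) (abs_nonneg _) (by positivity)
      · rw [Finset.sum_const, Nat.card_Icc, nsmul_eq_mul]
        apply mul_le_mul_of_nonneg_right _ hBcM
        exact_mod_cast Nat.cast_le.mpr (by omega : p + 1 - 1 ≤ n)
    · -- odd index : use claim A
      obtain ⟨k, hke⟩ := ho
      set p := k + 1 with hpdef
      have hp1 : 1 ≤ p := by omega
      have hpn : p ≤ n := by omega
      have hj : (i0:ℕ)+1 = 2*p-1 := by omega
      have hF := tridiag_claimA n hn t w lam htpos hwtop hrow (n-p) p (by omega) hp1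
      have hM' : M = |w (2*p-1)| := by rw [← hj, hwj0]
      have h0 : M = |lam| * |∑ q ∈ Finset.Icc p n,
          ((-1:ℝ)^(q-p) * ((∏ m ∈ Finset.Icc p (q-1), t (2*m)/t (2*m+1)) / t (2*p-1)) * w (2*q))| := by rw [hM', hF, abs_mul]
      refine le_trans (le_of_eq h0) ?_
      apply mul_le_mul_of_nonneg_left _ (abs_nonneg lam)
      refine le_trans (Finset.abs_sum_le_sum_abs _ _) ?_
      refine le_trans (Finset.sum_le_sum (g := fun _ => B / c * M) (fun q hq => ?_)) ?_
      · rw [Finset.mem_Icc] at hq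
        rw [abs_mul, abs_mul, abs_pow, abs_neg, abs_one, one_pow, one_mul]
        have hP := hcoef p q hp1 hq.1 hq.2
        have hPpos := hcoefpos p q hp1 hq.2
        have htq := htc (2*p-1) (by omega) (by omega)
        rw [abs_of_nonneg (div_nonneg hPpos (le_trans hc.le htq))]
        exact mul_le_mul (div_le_div₀ (by linarith : (0:ℝ) ≤ B) hP hc htq)
          (hwM _) (abs_nonneg _) (by positivity)
      · rw [Finset.sum_const, Nat.card_Icc, nsmul_eq_mul]
        apply mul_le_mul_of_nonneg_right _ hBcM
        exact_mod_cast Nat.cast_le.mpr (by omega : n + 1 - p ≤ n)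
  -- conclude
  have hn1 : (1:ℝ) ≤ (n:ℝ) := by exact_mod_cast hn
  have hnB : (0:ℝ) < (n:ℝ) * B := by nlinarith
  have hclam : c ≤ |lam| * ((n:ℝ) * B) := by
    have h1 : |lam| * (↑n * (B / c * M)) = (|lam| * (↑n * B)) * M / c := by
      field_simp
    rw [h1, le_div_iff₀ hc] at hkey
    rw [mul_comm M c] at hkey
    exact (mul_le_mul_iff_of_pos_right hMpos).mp hkey
  have hs : (1:ℝ) ≤ Real.sqrt (2*(n:ℝ)) := by
    rw [show (1:ℝ) = Real.sqrt 1 from Real.sqrt_one.symm]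
    apply Real.sqrt_le_sqrt
    linarith
  have hsn : (0:ℝ) ≤ Real.sqrt (2*(n:ℝ)) := Real.sqrt_nonneg _
  have hbig : (0:ℝ) < Real.sqrt (2*(n:ℝ)) * (n:ℝ) * B := by nlinarith
  rw [div_le_iff₀ hbig]
  nlinarith [abs_nonneg lam, hclam, hs, hnB]
end

section
/- Let n ≥ 1, let t₁, …, t_{2n−1} be nonzero real numbers, let H_{2n} be the 2n×2n real symmetric tridiagonal matrix with zero diagonal and off-diagonal entries H_{i,i+1} = H_{i+1,i} = tᵢ, and let H_{2n−1} be its leading (2n−1)×(2n−1) principal submatrix (obtained by deleting the last row and column). Then every nonzero eigenvalue μ of H_{2n−1} satisfies |μ| ≥ min{ |λ| : λ is an eigenvalue of H_{2n} }. -/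
open Matrix in
lemma tridiag_mulVec (m : ℕ) (t : ℕ → ℝ) (x : Fin m → ℝ) (i : Fin m) :
    (tridiagMatrix m t *ᵥ x) i =
      (if h : (i : ℕ) + 1 < m then t ((i : ℕ) + 1) * x ⟨(i : ℕ) + 1, h⟩ else 0)
      + (if h : 0 < (i : ℕ) then t (i : ℕ) * x ⟨(i : ℕ) - 1, Nat.lt_of_le_of_lt (Nat.sub_le _ _) i.isLt⟩ else 0) := by
  have hterm : ∀ j : Fin m, tridiagMatrix m t i j * x j
      = (if (i : ℕ) + 1 = (j : ℕ) then t ((i : ℕ) + 1) * x j else 0)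
      + (if (j : ℕ) + 1 = (i : ℕ) then t ((i : ℕ)) * x j else 0) := by
    intro j
    simp only [tridiagMatrix, Matrix.of_apply]
    split_ifs with h1 h2 h2
    · omega
    · rw [add_zero]
    · rw [zero_add, h2]
    · rw [zero_mul, add_zero]
  have hsum : (tridiagMatrix m t *ᵥ x) i = ∑ j : Fin m, tridiagMatrix m t i j * x j := rfl
  rw [hsum, Finset.sum_congr rfl (fun j _ => hterm j), Finset.sum_add_distrib]
  congr 1
  · by_cases h : (i : ℕ) + 1 < m
    · rw [dif_pos h]
      have heq : ∀ j : Fin m, (if (i : ℕ) + 1 = (j : ℕ) then t ((i : ℕ) + 1) * x j else 0)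
          = if j = (⟨(i : ℕ) + 1, h⟩ : Fin m) then t ((i : ℕ) + 1) * x ⟨(i : ℕ) + 1, h⟩ else 0 := by
        intro j
        by_cases hj : j = (⟨(i : ℕ) + 1, h⟩ : Fin m)
        · subst hj; simp
        · rw [if_neg hj, if_neg]
          intro hc; exact hj (Fin.ext hc.symm)
      rw [Finset.sum_congr rfl (fun j _ => heq j), Finset.sum_ite_eq' Finset.univ]
      simp
    · rw [dif_neg h]
      apply Finset.sum_eq_zero
      intro j _
      rw [if_neg]
      have := j.isLt; omega
  · by_cases h : 0 < (i : ℕ)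
    · rw [dif_pos h]
      have hlt : (i : ℕ) - 1 < m := by have := i.isLt; omega
      have heq : ∀ j : Fin m, (if (j : ℕ) + 1 = (i : ℕ) then t ((i : ℕ)) * x j else 0)
          = if j = (⟨(i : ℕ) - 1, hlt⟩ : Fin m) then t ((i : ℕ)) * x ⟨(i : ℕ) - 1, hlt⟩ else 0 := by
        intro j
        by_cases hj : j = (⟨(i : ℕ) - 1, hlt⟩ : Fin m)
        · subst hj
          simp only [if_pos rfl]
          rw [if_pos (show ((⟨(i : ℕ) - 1, hlt⟩ : Fin m) : ℕ) + 1 = (i : ℕ) by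
            show (i : ℕ) - 1 + 1 = (i : ℕ); omega)]
          simp
        · rw [if_neg hj, if_neg]
          intro hc; exact hj (Fin.ext (show (j : ℕ) = (i : ℕ) - 1 by omega))
      rw [Finset.sum_congr rfl (fun j _ => heq j), Finset.sum_ite_eq' Finset.univ]
      simp
    · rw [dif_neg h]
      apply Finset.sum_eq_zero
      intro j _
      rw [if_neg]
      omega

open Matrix in
lemma tridiag_isHermitian (m : ℕ) (t : ℕ → ℝ) : (tridiagMatrix m t).IsHermitian := by
  show (tridiagMatrix m t)ᴴ = tridiagMatrix m t
  ext i j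
  simp only [Matrix.conjTranspose_apply, star_trivial, tridiagMatrix, Matrix.of_apply]
  split_ifs <;> first | rfl | omega

/-- auxiliary sequence generating the kernel vector of the odd tridiagonal matrix -/
noncomputable def tdgAux (t : ℕ → ℝ) : ℕ → ℝ
  | 0 => 1
  | k + 1 => -(t (2 * k + 1) / t (2 * k + 2)) * tdgAux t k

lemma tdgAux_ne_zero (n : ℕ) (t : ℕ → ℝ) (ht : ∀ k, 1 ≤ k → k ≤ 2 * n - 1 → t k ≠ 0) :
    ∀ k, k + 1 ≤ n → tdgAux t k ≠ 0 := by
  intro k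
  induction k with
  | zero => intro _; show (1 : ℝ) ≠ 0; norm_num
  | succ k ih =>
    intro hk
    have h1 : t (2 * k + 1) ≠ 0 := ht _ (by omega) (by omega)
    have h2 : t (2 * k + 2) ≠ 0 := ht _ (by omega) (by omega)
    have h3 : tdgAux t k ≠ 0 := ih (by omega)
    show -(t (2 * k + 1) / t (2 * k + 2)) * tdgAux t k ≠ 0
    exact mul_ne_zero (neg_ne_zero.mpr (div_ne_zero h1 h2)) h3

/-- the kernel vector of the odd tridiagonal matrix -/
noncomputable def tdgZ (t : ℕ → ℝ) (m : ℕ) : Fin m → ℝ := fun j =>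
  if (j : ℕ) % 2 = 0 then tdgAux t ((j : ℕ) / 2) else 0

open Matrix in
lemma tdgZ_mulVec (n : ℕ) (hn : 1 ≤ n) (t : ℕ → ℝ)
    (ht : ∀ k, 1 ≤ k → k ≤ 2 * n - 1 → t k ≠ 0) :
    tridiagMatrix (2 * n - 1) t *ᵥ tdgZ t (2 * n - 1) = 0 := by
  funext i
  rw [tridiag_mulVec]
  have him := i.isLt
  by_cases hpar : (i : ℕ) % 2 = 0
  · have e1 : (if h : (i : ℕ) + 1 < 2 * n - 1 then
        t ((i : ℕ) + 1) * tdgZ t (2 * n - 1) ⟨(i : ℕ) + 1, h⟩ else 0) = 0 := by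
      split
      · have : ((i : ℕ) + 1) % 2 ≠ 0 := by omega
        simp [tdgZ, this]
      · rfl
    have e2 : (if h : 0 < (i : ℕ) then
        t ((i : ℕ)) * tdgZ t (2 * n - 1) ⟨(i : ℕ) - 1, Nat.lt_of_le_of_lt (Nat.sub_le _ _) i.isLt⟩ else 0) = 0 := by
      split
      · have : ((i : ℕ) - 1) % 2 ≠ 0 := by omega
        simp [tdgZ, this]
      · rfl
    rw [e1, e2]
    simp
  · -- i odd, i = 2k+1
    set k := (i : ℕ) / 2 with hk
    have hik : (i : ℕ) = 2 * k + 1 := by omega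
    have h1 : (i : ℕ) + 1 < 2 * n - 1 := by omega
    have h0 : 0 < (i : ℕ) := by omega
    rw [dif_pos h1, dif_pos h0]
    have hz1 : tdgZ t (2 * n - 1) ⟨(i : ℕ) + 1, h1⟩ = tdgAux t (k + 1) := by
      have hm : ((i : ℕ) + 1) % 2 = 0 := by omega
      have hd : ((i : ℕ) + 1) / 2 = k + 1 := by omega
      simp [tdgZ, hm, hd]
    have hz2 : tdgZ t (2 * n - 1) ⟨(i : ℕ) - 1, Nat.lt_of_le_of_lt (Nat.sub_le _ _) i.isLt⟩ = tdgAux t k := by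
      have hm : ((i : ℕ) - 1) % 2 = 0 := by omega
      have hd : ((i : ℕ) - 1) / 2 = k := by omega
      simp [tdgZ, hm, hd]
    rw [hz1, hz2]
    have ht2 : t (2 * k + 2) ≠ 0 := ht _ (by omega) (by omega)
    have haux : tdgAux t (k + 1) = -(t (2 * k + 1) / t (2 * k + 2)) * tdgAux t k := rfl
    rw [haux]
    have hcoe1 : (i : ℕ) + 1 = 2 * k + 2 := by omega
    have hcoe2 : (i : ℕ) = 2 * k + 1 := hik
    rw [hcoe1, hcoe2]
    show t (2 * k + 2) * (-(t (2 * k + 1) / t (2 * k + 2)) * tdgAux t k)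
        + t (2 * k + 1) * tdgAux t k = 0
    field_simp
    ring

open Matrix in
lemma exists_eigen_sq_le {m : ℕ} (A : Matrix (Fin m) (Fin m) ℝ) (hA : A.IsHermitian)
    (w : Fin m → ℝ) (hw : w ≠ 0) (c : ℝ)
    (hc : (A *ᵥ w) ⬝ᵥ (A *ᵥ w) ≤ c * (w ⬝ᵥ w)) :
    ∃ lam : ℝ, Module.End.HasEigenvalue (Matrix.toLin' A) lam ∧ lam ^ 2 ≤ c := by
  by_contra hcon
  push_neg at hcon
  set b := hA.eigenvectorBasis with hb
  set lam := hA.eigenvalues with hlam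
  have hsymm : Aᵀ = A := by
    ext i j
    have := congrFun (congrFun hA.eq i) j
    simpa [Matrix.conjTranspose_apply] using this
  have heig : ∀ i, Module.End.HasEigenvalue (Matrix.toLin' A) (lam i) := by
    intro i
    apply Module.End.hasEigenvalue_of_hasEigenvector (x := ⇑(b i))
    constructor
    · rw [Module.End.mem_eigenspace_iff, Matrix.toLin'_apply]
      exact hA.mulVec_eigenvectorBasis i
    · intro h
      exact b.orthonormal.ne_zero i (by ext j; exact congrFun h j)
  have hgt : ∀ i, c < lam i ^ 2 := fun i => hcon _ (heig i)
  set W : EuclideanSpace ℝ (Fin m) := WithLp.toLp 2 w with hW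
  set AW : EuclideanSpace ℝ (Fin m) := WithLp.toLp 2 (A *ᵥ w) with hAW
  have hinner : ∀ x y : EuclideanSpace ℝ (Fin m),
      inner ℝ x y = (fun j => x j) ⬝ᵥ (fun j => y j) := by
    intro x y
    simp [PiLp.inner_apply, RCLike.inner_apply, dotProduct, mul_comm]
  have key : inner ℝ AW AW ≤ c * inner ℝ W W := by
    rw [hinner, hinner]; exact hc
  set d : Fin m → ℝ := fun i => inner ℝ (b i) W with hd
  have hbAW : ∀ i, inner ℝ (b i) AW = lam i * d i := by
    intro i
    have hdi : d i = (fun j => (b i) j) ⬝ᵥ (fun j => W j) := hinner (b i) W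
    rw [hinner, hdi]
    have h1 : (fun j => (b i) j) ⬝ᵥ (fun j => AW j) = (fun j => (b i) j) ⬝ᵥ (A *ᵥ w) := rfl
    rw [h1, Matrix.dotProduct_mulVec, ← hsymm, Matrix.vecMul_transpose]
    have h2 : A *ᵥ (fun j => (b i) j) = lam i • fun j => (b i) j := hA.mulVec_eigenvectorBasis i
    rw [h2, smul_dotProduct]
    rfl
  have hPW : inner ℝ W W = ∑ i, d i ^ 2 := by
    rw [← b.sum_inner_mul_inner W W]
    congr 1; ext i
    have hcomm : inner ℝ W (b i) = d i := real_inner_comm (b i) W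
    rw [hcomm]
    exact (pow_two (d i)).symm
  have hPAW : inner ℝ AW AW = ∑ i, (lam i * d i) ^ 2 := by
    rw [← b.sum_inner_mul_inner AW AW]
    congr 1; ext i
    have hcomm : inner ℝ AW (b i) = lam i * d i := (real_inner_comm (b i) AW).trans (hbAW i)
    rw [hcomm, hbAW]
    exact (pow_two (lam i * d i)).symm
  have hex : ∃ i, d i ≠ 0 := by
    by_contra hall
    push_neg at hall
    apply hw
    have : b.repr W = 0 := by
      ext i
      rw [b.repr_apply_apply]
      exact hall i
    have : W = 0 := by
      have := congrArg b.repr.symm this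
      simpa using this
    ext j
    exact congrArg (fun (v : EuclideanSpace ℝ (Fin m)) => v j) this
  obtain ⟨i0, hi0⟩ := hex
  have hlt : c * inner ℝ W W < inner ℝ AW AW := by
    rw [hPW, hPAW, Finset.mul_sum]
    apply Finset.sum_lt_sum
    · intro i _
      have h1 : c ≤ lam i ^ 2 := le_of_lt (hgt i)
      have h2 : (0:ℝ) ≤ d i ^ 2 := sq_nonneg _
      calc c * d i ^ 2 ≤ lam i ^ 2 * d i ^ 2 := by nlinarith
        _ = (lam i * d i) ^ 2 := by ring
    · exact ⟨i0, Finset.mem_univ i0, by nlinarith [hgt i0, mul_self_pos.mpr hi0, sq_nonneg (d i0)]⟩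
  linarith

open Matrix

/-- (Interlacing consequence.) Let `H₂ₙ` be the `2n × 2n` tridiagonal matrix
with nonzero off-diagonal entries `t₁, …, t_{2n-1}` and let `H_{2n-1}` be its leading principal
submatrix obtained by deleting the last row and column.  Then every nonzero eigenvalue `μ` of
`H_{2n-1}` satisfies `|μ| ≥ min{|λ| : λ eigenvalue of H₂ₙ}`. -/
theorem tridiag_principal_submatrix_gap_bound
    (n : ℕ) (hn : 1 ≤ n) (t : ℕ → ℝ)
    (ht : ∀ k, 1 ≤ k → k ≤ 2 * n - 1 → t k ≠ 0)
    (μ : ℝ)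
    (hμ : Module.End.HasEigenvalue
      (Matrix.toLin' ((tridiagMatrix (2 * n) t).submatrix
        (fun i : Fin (2 * n - 1) => Fin.castLE (by omega) i)
        (fun i : Fin (2 * n - 1) => Fin.castLE (by omega) i))) μ)
    (hμ0 : μ ≠ 0)
    (Δ : ℝ)
    (hΔ : IsLeast {x : ℝ | ∃ lam : ℝ,
        Module.End.HasEigenvalue (Matrix.toLin' (tridiagMatrix (2 * n) t)) lam ∧ x = |lam|} Δ) :
    Δ ≤ |μ| := by
  classical
  -- the submatrix is the odd tridiagonal matrix
  have hBeq : ((tridiagMatrix (2 * n) t).submatrix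
        (fun i : Fin (2 * n - 1) => Fin.castLE (by omega) i)
        (fun i : Fin (2 * n - 1) => Fin.castLE (by omega) i)) = tridiagMatrix (2 * n - 1) t := by
    ext i j
    simp [tridiagMatrix, Matrix.submatrix_apply]
  rw [hBeq] at hμ
  set M := tridiagMatrix (2 * n - 1) t with hM
  set A := tridiagMatrix (2 * n) t with hA
  -- eigenvector u
  obtain ⟨u, humem, hu0⟩ := hμ.exists_hasEigenvector
  have hu : M *ᵥ u = μ • u := by
    have := Module.End.mem_eigenspace_iff.mp humem
    rwa [Matrix.toLin'_apply] at this
  -- kernel vector z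
  set z : Fin (2 * n - 1) → ℝ := tdgZ t (2 * n - 1) with hzdef
  have hz : M *ᵥ z = 0 := tdgZ_mulVec n hn t ht
  set L : Fin (2 * n - 1) := ⟨2 * n - 2, by omega⟩ with hL
  have hzL : z L ≠ 0 := by
    have hm : (2 * n - 2) % 2 = 0 := by omega
    have hd : (2 * n - 2) / 2 = n - 1 := by omega
    have : z L = tdgAux t (n - 1) := by
      show (if (2 * n - 2) % 2 = 0 then tdgAux t ((2 * n - 2) / 2) else 0) = _
      rw [if_pos hm, hd]
    rw [this]
    exact tdgAux_ne_zero n t ht (n - 1) (by omega)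
  -- symmetry of M
  have hMsym : Mᵀ = M := by
    have h := tridiag_isHermitian (2 * n - 1) t
    ext i j
    have := congrFun (congrFun h i) j
    simpa [Matrix.conjTranspose_apply] using this
  -- orthogonality u ⬝ᵥ z = 0
  have hortho : u ⬝ᵥ z = 0 := by
    have h1 : (M *ᵥ u) ⬝ᵥ z = 0 := by
      rw [dotProduct_comm, Matrix.dotProduct_mulVec, ← hMsym, Matrix.vecMul_transpose,
        hz, zero_dotProduct]
    rw [hu, smul_dotProduct] at h1
    have := mul_eq_zero.mp h1
    tauto
  -- corrected vector v with vanishing last coordinate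
  set a : ℝ := -(u L / z L) with ha
  set v : Fin (2 * n - 1) → ℝ := u + a • z with hv
  have hvL : v L = 0 := by
    show u L + a * z L = 0
    rw [ha]
    field_simp
    ring
  have hMv : M *ᵥ v = μ • u := by
    rw [hv, Matrix.mulVec_add, Matrix.mulVec_smul, hz, smul_zero, add_zero, hu]
  -- extension to size 2n
  set w : Fin (2 * n) → ℝ := fun i => if h : (i : ℕ) < 2 * n - 1 then v ⟨i, h⟩ else 0 with hw
  set uex : Fin (2 * n) → ℝ :=
    fun i => if h : (i : ℕ) < 2 * n - 1 then u ⟨i, h⟩ else 0 with huex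
  have hAw : A *ᵥ w = μ • uex := by
    funext i
    rw [tridiag_mulVec]
    by_cases hi : (i : ℕ) < 2 * n - 1
    · -- row inside the submatrix
      have hrow := congrFun hMv ⟨(i : ℕ), hi⟩
      rw [tridiag_mulVec] at hrow
      rw [Pi.smul_apply, smul_eq_mul] at hrow
      have hrhs : (μ • uex) i = μ * u ⟨(i : ℕ), hi⟩ := by
        show μ * uex i = _
        rw [huex]
        simp only [dif_pos hi]
      rw [hrhs, ← hrow]
      congr 1
      · -- upper neighbour terms
        by_cases h1 : (i : ℕ) + 1 < 2 * n - 1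
        · rw [dif_pos (show (i : ℕ) + 1 < 2 * n by omega), dif_pos h1]
          congr 1
          show w ⟨(i : ℕ) + 1, by omega⟩ = v ⟨(i : ℕ) + 1, h1⟩
          rw [hw]
          simp only [dif_pos (show ((⟨(i : ℕ) + 1, by omega⟩ : Fin (2 * n)) : ℕ) < 2 * n - 1 from h1)]
        · -- i + 1 = 2n - 1
          have hieq : (i : ℕ) + 1 = 2 * n - 1 := by omega
          rw [dif_neg h1, dif_pos (show (i : ℕ) + 1 < 2 * n by omega)]
          have hwz : w ⟨(i : ℕ) + 1, by omega⟩ = 0 := by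
            rw [hw]
            simp only [dif_neg (show ¬(((⟨(i : ℕ) + 1, by omega⟩ : Fin (2 * n)) : ℕ) < 2 * n - 1) by
              show ¬((i : ℕ) + 1 < 2 * n - 1); omega)]
          rw [hwz, mul_zero]
      · -- lower neighbour terms
        by_cases h0 : 0 < (i : ℕ)
        · rw [dif_pos h0, dif_pos h0]
          congr 1
          show w ⟨(i : ℕ) - 1, _⟩ = v ⟨(i : ℕ) - 1, _⟩
          rw [hw]
          simp only [dif_pos (show ((⟨(i : ℕ) - 1, by omega⟩ : Fin (2 * n)) : ℕ) < 2 * n - 1 by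
            show (i : ℕ) - 1 < 2 * n - 1; omega)]
        · rw [dif_neg h0, dif_neg h0]
    · -- last row
      have hieq : (i : ℕ) = 2 * n - 1 := by have := i.isLt; omega
      have hrhs : (μ • uex) i = 0 := by
        show μ * uex i = 0
        rw [huex]
        simp only [dif_neg hi, mul_zero]
      rw [hrhs]
      have e1 : (if h : (i : ℕ) + 1 < 2 * n then t ((i : ℕ) + 1) * w ⟨(i : ℕ) + 1, h⟩ else 0)
          = 0 := by
        rw [dif_neg (by omega)]
      have e2 : (if h : 0 < (i : ℕ) then
          t ((i : ℕ)) * w ⟨(i : ℕ) - 1, Nat.lt_of_le_of_lt (Nat.sub_le _ _) i.isLt⟩ else 0)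
          = 0 := by
        rw [dif_pos (show 0 < (i : ℕ) by omega)]
        have : w ⟨(i : ℕ) - 1, Nat.lt_of_le_of_lt (Nat.sub_le _ _) i.isLt⟩ = 0 := by
          rw [hw]
          have hcond : ((⟨(i : ℕ) - 1, Nat.lt_of_le_of_lt (Nat.sub_le _ _) i.isLt⟩ :
              Fin (2 * n)) : ℕ) < 2 * n - 1 := by
            show (i : ℕ) - 1 < 2 * n - 1; omega
          simp only [dif_pos hcond]
          have : (⟨((⟨(i : ℕ) - 1, Nat.lt_of_le_of_lt (Nat.sub_le _ _) i.isLt⟩ :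
              Fin (2 * n)) : ℕ), hcond⟩ : Fin (2 * n - 1)) = L := by
            apply Fin.ext
            show (i : ℕ) - 1 = 2 * n - 2
            omega
          rw [this, hvL]
        rw [this, mul_zero]
      rw [e1, e2, add_zero]
  -- dot products
  have hdotrange : ∀ (m : ℕ) (x y : Fin m → ℝ) (f : ℕ → ℝ),
      (∀ j : Fin m, x j * y j = f (j : ℕ)) → x ⬝ᵥ y = ∑ j ∈ Finset.range m, f j := by
    intro m x y f hf
    rw [show x ⬝ᵥ y = ∑ j : Fin m, x j * y j from rfl,
      Finset.sum_congr rfl (fun j _ => hf j), ← Fin.sum_univ_eq_sum_range]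
  -- uex ⬝ᵥ uex = u ⬝ᵥ u
  set fu : ℕ → ℝ := fun j => if h : j < 2 * n - 1 then u ⟨j, h⟩ * u ⟨j, h⟩ else 0 with hfu
  have h1 : uex ⬝ᵥ uex = ∑ j ∈ Finset.range (2 * n), fu j := by
    apply hdotrange
    intro j
    rw [huex, hfu]
    by_cases h : (j : ℕ) < 2 * n - 1
    · simp only [dif_pos h]
    · simp only [dif_neg h, mul_zero]
  have h2 : u ⬝ᵥ u = ∑ j ∈ Finset.range (2 * n - 1), fu j := by
    apply hdotrange
    intro j
    rw [hfu]
    simp only [dif_pos j.isLt, Fin.eta]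
  have huexu : uex ⬝ᵥ uex = u ⬝ᵥ u := by
    rw [h1, h2, show 2 * n = (2 * n - 1) + 1 by omega, Finset.sum_range_succ]
    have : fu (2 * n - 1) = 0 := by rw [hfu]; simp
    rw [this, add_zero]
    norm_num
  -- w ⬝ᵥ w = v ⬝ᵥ v
  set fv : ℕ → ℝ := fun j => if h : j < 2 * n - 1 then v ⟨j, h⟩ * v ⟨j, h⟩ else 0 with hfv
  have h3 : w ⬝ᵥ w = ∑ j ∈ Finset.range (2 * n), fv j := by
    apply hdotrange
    intro j
    rw [hw, hfv]
    by_cases h : (j : ℕ) < 2 * n - 1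
    · simp only [dif_pos h]
    · simp only [dif_neg h, mul_zero]
  have h4 : v ⬝ᵥ v = ∑ j ∈ Finset.range (2 * n - 1), fv j := by
    apply hdotrange
    intro j
    rw [hfv]
    simp only [dif_pos j.isLt, Fin.eta]
  have hwv : w ⬝ᵥ w = v ⬝ᵥ v := by
    rw [h3, h4, show 2 * n = (2 * n - 1) + 1 by omega, Finset.sum_range_succ]
    have : fv (2 * n - 1) = 0 := by rw [hfv]; simp
    rw [this, add_zero]
    norm_num
  -- v ⬝ᵥ v = u ⬝ᵥ u + a^2 * (z ⬝ᵥ z)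
  have hvv : v ⬝ᵥ v = u ⬝ᵥ u + a ^ 2 * (z ⬝ᵥ z) := by
    rw [hv, add_dotProduct, dotProduct_add, dotProduct_add,
      smul_dotProduct, dotProduct_smul, dotProduct_smul,
      smul_dotProduct]
    rw [hortho, dotProduct_comm z u, hortho]
    simp only [smul_eq_mul, mul_zero, add_zero, zero_add]
    ring
  have hzznn : 0 ≤ z ⬝ᵥ z := Finset.sum_nonneg fun i _ => mul_self_nonneg _
  have huu_pos : 0 < u ⬝ᵥ u := by
    rcases lt_or_eq_of_le (Finset.sum_nonneg fun i (_ : i ∈ Finset.univ) =>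
        mul_self_nonneg (u i) : (0:ℝ) ≤ u ⬝ᵥ u) with h | h
    · exact h
    · exact absurd (dotProduct_self_eq_zero.mp h.symm) hu0
  have hww_ge : u ⬝ᵥ u ≤ w ⬝ᵥ w := by
    rw [hwv, hvv]
    nlinarith [sq_nonneg a]
  have hw0 : w ≠ 0 := by
    intro h
    rw [h, zero_dotProduct] at hww_ge
    linarith
  -- apply the spectral bound
  have hcineq : (A *ᵥ w) ⬝ᵥ (A *ᵥ w) ≤ μ ^ 2 * (w ⬝ᵥ w) := by
    rw [hAw, smul_dotProduct, dotProduct_smul, huexu]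
    have : μ • (μ • (u ⬝ᵥ u)) = μ ^ 2 * (u ⬝ᵥ u) := by
      simp only [smul_eq_mul]; ring
    rw [this]
    nlinarith [sq_nonneg μ]
  obtain ⟨lam, hlameig, hlamle⟩ :=
    exists_eigen_sq_le A (tridiag_isHermitian (2 * n) t) w hw0 (μ ^ 2) hcineq
  have hΔle : Δ ≤ |lam| := hΔ.2 ⟨lam, hlameig, rfl⟩
  have : |lam| ≤ |μ| := by
    nlinarith [abs_nonneg lam, abs_nonneg μ, sq_abs lam, sq_abs μ]
  linarith
end

section
/- There exists a constant C > 0 such that for every integer N ≥ 2, Σ_{(k,ℓ) ∈ {0,…,N}² \ {(0,0)}} 1/( sin²(πk/(2N)) + sin²(πℓ/(2N)) ) ≤ C·N²·log N. -/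
open Real Finset

private lemma harm_le : ∀ n : ℕ, 1 ≤ n →
    ∑ s ∈ Finset.Ico 1 (n + 1), (1 : ℝ) / s ≤ 1 + Real.log n := by
  intro n
  induction n with
  | zero => intro h; omega
  | succ m ih =>
    intro _
    rcases Nat.eq_zero_or_pos m with h1 | h1
    · subst h1; norm_num
    · rw [Finset.sum_Ico_succ_top (by omega)]
      have hmpos : (0 : ℝ) < m := by exact_mod_cast h1
      have hm1pos : (0 : ℝ) < (m : ℝ) + 1 := by linarith
      have hlog : Real.log ((m : ℝ) / ((m : ℝ) + 1)) ≤ (m : ℝ) / ((m : ℝ) + 1) - 1 :=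
        Real.log_le_sub_one_of_pos (by positivity)
      rw [Real.log_div (ne_of_gt hmpos) (ne_of_gt hm1pos)] at hlog
      have heq : (m : ℝ) / ((m : ℝ) + 1) - 1 = -(1 / ((m : ℝ) + 1)) := by field_simp; ring
      have ihm := ih h1
      push_cast
      linarith [hlog, heq ▸ hlog]

/-- There is a constant `C > 0` such that for every `N ≥ 2`,
`Σ_{(k,ℓ) ∈ {0,…,N}² \ {(0,0)}} 1/(sin²(πk/(2N)) + sin²(πℓ/(2N))) ≤ C·N²·log N`. -/
theorem discrete_laplacian_green_function_sum_bound :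
    ∃ C : ℝ, 0 < C ∧ ∀ N : ℕ, 2 ≤ N →
      ∑ p ∈ (Finset.range (N + 1) ×ˢ Finset.range (N + 1)).erase (0, 0),
          1 / (Real.sin (Real.pi * p.1 / (2 * N)) ^ 2 +
               Real.sin (Real.pi * p.2 / (2 * N)) ^ 2)
        ≤ C * N ^ 2 * Real.log N := by
  refine ⟨16, by norm_num, ?_⟩
  intro N hN
  have hNr : (0 : ℝ) < N := by positivity
  have hN2 : (2 : ℝ) ≤ N := by exact_mod_cast hN
  set S := (Finset.range (N + 1) ×ˢ Finset.range (N + 1)).erase (0, 0) with hS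
  -- pointwise bound
  have hsin : ∀ k : ℕ, k ≤ N → (k : ℝ) / N ≤ Real.sin (Real.pi * k / (2 * N)) := by
    intro k hk
    have h1 : (0 : ℝ) ≤ (k : ℝ) / N := by positivity
    have h2 : (k : ℝ) / N ≤ 1 := by
      rw [div_le_one hNr]; exact_mod_cast hk
    have := Real.le_sin_mul h1 h2
    have harg : Real.pi / 2 * ((k : ℝ) / N) = Real.pi * k / (2 * N) := by ring
    rwa [harg] at this
  have hpt : ∀ p ∈ S,
      1 / (Real.sin (Real.pi * p.1 / (2 * N)) ^ 2 + Real.sin (Real.pi * p.2 / (2 * N)) ^ 2)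
        ≤ 2 * (N : ℝ) ^ 2 / ((p.1 + p.2 : ℕ) : ℝ) ^ 2 := by
    intro p hp
    obtain ⟨hne, hmem⟩ := Finset.mem_erase.mp hp
    rw [Finset.mem_product, Finset.mem_range, Finset.mem_range] at hmem
    have hk : p.1 ≤ N := by omega
    have hl : p.2 ≤ N := by omega
    have hsum : 1 ≤ p.1 + p.2 := by
      rcases Nat.eq_zero_or_pos (p.1 + p.2) with h | h
      · exfalso; apply hne; have := Nat.add_eq_zero.mp h
        exact Prod.ext this.1 this.2
      · exact h
    have hsumr : (1 : ℝ) ≤ ((p.1 + p.2 : ℕ) : ℝ) := by exact_mod_cast hsum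
    have hs1 := hsin p.1 hk
    have hs2 := hsin p.2 hl
    have hk0 : (0 : ℝ) ≤ (p.1 : ℝ) / N := by positivity
    have hl0 : (0 : ℝ) ≤ (p.2 : ℝ) / N := by positivity
    have hsq1 : ((p.1 : ℝ) / N) ^ 2 ≤ Real.sin (Real.pi * p.1 / (2 * N)) ^ 2 :=
      pow_le_pow_left₀ hk0 hs1 2
    have hsq2 : ((p.2 : ℝ) / N) ^ 2 ≤ Real.sin (Real.pi * p.2 / (2 * N)) ^ 2 :=
      pow_le_pow_left₀ hl0 hs2 2
    have hlow : ((p.1 + p.2 : ℕ) : ℝ) ^ 2 / (2 * (N : ℝ) ^ 2)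
        ≤ Real.sin (Real.pi * p.1 / (2 * N)) ^ 2 + Real.sin (Real.pi * p.2 / (2 * N)) ^ 2 := by
      have h2sq : ((p.1 + p.2 : ℕ) : ℝ) ^ 2 ≤ 2 * ((p.1 : ℝ) ^ 2 + (p.2 : ℝ) ^ 2) := by
        push_cast
        nlinarith [sq_nonneg ((p.1 : ℝ) - (p.2 : ℝ))]
      have : ((p.1 : ℝ) / N) ^ 2 + ((p.2 : ℝ) / N) ^ 2
          = ((p.1 : ℝ) ^ 2 + (p.2 : ℝ) ^ 2) / (N : ℝ) ^ 2 := by ring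
      rw [div_le_iff₀ (by positivity)]
      have e1 : ((p.1 : ℝ) / N) ^ 2 = (p.1 : ℝ) ^ 2 / (N : ℝ) ^ 2 := div_pow _ _ 2
      have e2 : ((p.2 : ℝ) / N) ^ 2 = (p.2 : ℝ) ^ 2 / (N : ℝ) ^ 2 := div_pow _ _ 2
      rw [e1] at hsq1
      rw [e2] at hsq2
      have hN2pos : (0 : ℝ) < (N : ℝ) ^ 2 := by positivity
      have f1 := (div_le_iff₀ hN2pos).mp hsq1
      have f2 := (div_le_iff₀ hN2pos).mp hsq2
      nlinarith [h2sq, f1, f2]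
    have hlowpos : (0 : ℝ) < ((p.1 + p.2 : ℕ) : ℝ) ^ 2 / (2 * (N : ℝ) ^ 2) := by positivity
    calc 1 / (Real.sin (Real.pi * p.1 / (2 * N)) ^ 2 + Real.sin (Real.pi * p.2 / (2 * N)) ^ 2)
        ≤ 1 / (((p.1 + p.2 : ℕ) : ℝ) ^ 2 / (2 * (N : ℝ) ^ 2)) :=
          one_div_le_one_div_of_le hlowpos hlow
      _ = 2 * (N : ℝ) ^ 2 / ((p.1 + p.2 : ℕ) : ℝ) ^ 2 := by
          rw [one_div_div]
  have step1 : ∑ p ∈ S, 1 / (Real.sin (Real.pi * p.1 / (2 * N)) ^ 2 +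
        Real.sin (Real.pi * p.2 / (2 * N)) ^ 2)
      ≤ ∑ p ∈ S, 2 * (N : ℝ) ^ 2 / ((p.1 + p.2 : ℕ) : ℝ) ^ 2 :=
    Finset.sum_le_sum hpt
  -- enlarge to biUnion of antidiagonals
  set U := (Finset.Ico 1 (2 * N + 1)).biUnion Finset.HasAntidiagonal.antidiagonal with hU
  have hSU : S ⊆ U := by
    intro p hp
    obtain ⟨hne, hmem⟩ := Finset.mem_erase.mp hp
    rw [Finset.mem_product, Finset.mem_range, Finset.mem_range] at hmem
    have hsum : 1 ≤ p.1 + p.2 := by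
      rcases Nat.eq_zero_or_pos (p.1 + p.2) with h | h
      · exfalso; apply hne; have := Nat.add_eq_zero.mp h
        exact Prod.ext this.1 this.2
      · exact h
    apply Finset.mem_biUnion.mpr
    exact ⟨p.1 + p.2, Finset.mem_Ico.mpr ⟨hsum, by omega⟩, by
      simp [Finset.HasAntidiagonal.mem_antidiagonal]⟩
  have step2 : ∑ p ∈ S, 2 * (N : ℝ) ^ 2 / ((p.1 + p.2 : ℕ) : ℝ) ^ 2
      ≤ ∑ p ∈ U, 2 * (N : ℝ) ^ 2 / ((p.1 + p.2 : ℕ) : ℝ) ^ 2 := by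
    apply Finset.sum_le_sum_of_subset_of_nonneg hSU
    intro p _ _
    positivity
  have hdisj : Set.PairwiseDisjoint ↑(Finset.Ico 1 (2 * N + 1))
      (Finset.HasAntidiagonal.antidiagonal : ℕ → Finset (ℕ × ℕ)) := by
    intro a _ b _ hab
    apply Finset.disjoint_left.mpr
    intro p hpa hpb
    rw [Finset.HasAntidiagonal.mem_antidiagonal] at hpa hpb
    exact hab (hpa ▸ hpb ▸ rfl)
  have step3 : ∑ p ∈ U, 2 * (N : ℝ) ^ 2 / ((p.1 + p.2 : ℕ) : ℝ) ^ 2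
      = ∑ s ∈ Finset.Ico 1 (2 * N + 1), ∑ p ∈ Finset.HasAntidiagonal.antidiagonal s,
          2 * (N : ℝ) ^ 2 / ((p.1 + p.2 : ℕ) : ℝ) ^ 2 := by
    rw [hU, Finset.sum_biUnion hdisj]
  have step4 : ∀ s ∈ Finset.Ico 1 (2 * N + 1),
      ∑ p ∈ Finset.HasAntidiagonal.antidiagonal s, 2 * (N : ℝ) ^ 2 / ((p.1 + p.2 : ℕ) : ℝ) ^ 2
        ≤ 4 * (N : ℝ) ^ 2 * (1 / (s : ℝ)) := by
    intro s hs
    have hs1 : 1 ≤ s := (Finset.mem_Ico.mp hs).1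
    have hsr : (1 : ℝ) ≤ (s : ℝ) := by exact_mod_cast hs1
    have : ∑ p ∈ Finset.HasAntidiagonal.antidiagonal s, 2 * (N : ℝ) ^ 2 / ((p.1 + p.2 : ℕ) : ℝ) ^ 2
        = ∑ p ∈ Finset.HasAntidiagonal.antidiagonal s, 2 * (N : ℝ) ^ 2 / (s : ℝ) ^ 2 := by
      apply Finset.sum_congr rfl
      intro p hp
      rw [Finset.HasAntidiagonal.mem_antidiagonal] at hp
      rw [hp]
    rw [this, Finset.sum_const, Finset.Nat.card_antidiagonal, nsmul_eq_mul]
    have hcard : ((s + 1 : ℕ) : ℝ) ≤ 2 * (s : ℝ) := by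
      push_cast; linarith
    have h1 : (0 : ℝ) < (s : ℝ) := by linarith
    have hmain : ((s + 1 : ℕ) : ℝ) * (2 * (N : ℝ) ^ 2 / (s : ℝ) ^ 2)
        ≤ 2 * (s : ℝ) * (2 * (N : ℝ) ^ 2 / (s : ℝ) ^ 2) :=
      mul_le_mul_of_nonneg_right hcard (by positivity)
    have heq2 : 2 * (s : ℝ) * (2 * (N : ℝ) ^ 2 / (s : ℝ) ^ 2)
        = 4 * (N : ℝ) ^ 2 * (1 / (s : ℝ)) := by
      field_simp
      ring
    linarith
  have step5 : ∑ s ∈ Finset.Ico 1 (2 * N + 1), (4 * (N : ℝ) ^ 2 * (1 / (s : ℝ)))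
      ≤ 4 * (N : ℝ) ^ 2 * (1 + Real.log (2 * N)) := by
    rw [← Finset.mul_sum]
    apply mul_le_mul_of_nonneg_left _ (by positivity)
    have := harm_le (2 * N) (by omega)
    calc ∑ s ∈ Finset.Ico 1 (2 * N + 1), (1 : ℝ) / s
        ≤ 1 + Real.log (2 * N : ℕ) := this
      _ = 1 + Real.log (2 * N) := by push_cast; ring_nf
  -- final arithmetic
  have hlogN : Real.log 2 ≤ Real.log N := Real.log_le_log (by norm_num) hN2
  have hlog2 : (1 : ℝ) / 2 ≤ Real.log 2 := by
    have := Real.log_two_gt_d9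
    linarith
  have hfin : 4 * (N : ℝ) ^ 2 * (1 + Real.log (2 * N)) ≤ 16 * (N : ℝ) ^ 2 * Real.log N := by
    have hexp : Real.log (2 * (N : ℝ)) = Real.log 2 + Real.log N :=
      Real.log_mul (by norm_num) (ne_of_gt hNr)
    rw [hexp]
    nlinarith [sq_nonneg (N : ℝ), hlogN, hlog2]
  calc ∑ p ∈ S, 1 / (Real.sin (Real.pi * p.1 / (2 * N)) ^ 2 +
        Real.sin (Real.pi * p.2 / (2 * N)) ^ 2)
      ≤ ∑ p ∈ S, 2 * (N : ℝ) ^ 2 / ((p.1 + p.2 : ℕ) : ℝ) ^ 2 := step1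
    _ ≤ ∑ p ∈ U, 2 * (N : ℝ) ^ 2 / ((p.1 + p.2 : ℕ) : ℝ) ^ 2 := step2
    _ = ∑ s ∈ Finset.Ico 1 (2 * N + 1), ∑ p ∈ Finset.HasAntidiagonal.antidiagonal s,
          2 * (N : ℝ) ^ 2 / ((p.1 + p.2 : ℕ) : ℝ) ^ 2 := step3
    _ ≤ ∑ s ∈ Finset.Ico 1 (2 * N + 1), (4 * (N : ℝ) ^ 2 * (1 / (s : ℝ))) :=
        Finset.sum_le_sum step4
    _ ≤ 4 * (N : ℝ) ^ 2 * (1 + Real.log (2 * N)) := step5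
    _ ≤ 16 * (N : ℝ) ^ 2 * Real.log N := hfin
end

section
/- Let H and H̃ be n×n complex Hermitian matrices, let a and b be unit vectors in ℂⁿ, let T > 0 and p > 0, and suppose that (1/T)·∫₀^T |⟨b, exp(−itH)·a⟩|² dt ≥ p and that the operator norm satisfies ‖H − H̃‖ ≤ p/(4T). Then (1/T)·∫₀^T |⟨b, exp(−itH̃)·a⟩|² dt ≥ p/2. -/
open MeasureTheory Matrix

section aux

open NormedSpace Complex

open scoped InnerProductSpace

variable {n : ℕ}

private lemma aux_norm_one_le :
    ‖(1 : EuclideanSpace ℂ (Fin n) →L[ℂ] EuclideanSpace ℂ (Fin n))‖ ≤ 1 :=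
  ContinuousLinearMap.norm_id_le

private lemma aux_norm_exp_le_one
    (A : EuclideanSpace ℂ (Fin n) →L[ℂ] EuclideanSpace ℂ (Fin n))
    (hA : IsSelfAdjoint A) (c : ℂ) (hc : star c = -c) :
    ‖exp (c • A)‖ ≤ 1 := by
  have hskew : c • A ∈ skewAdjoint (EuclideanSpace ℂ (Fin n) →L[ℂ] EuclideanSpace ℂ (Fin n)) := by
    rw [skewAdjoint.mem_iff, star_smul, hA.star_eq, hc]
    exact neg_smul c A
  letI : NormedAlgebra ℚ (EuclideanSpace ℂ (Fin n) →L[ℂ] EuclideanSpace ℂ (Fin n)) :=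
    NormedAlgebra.restrictScalars ℚ ℂ _
  have hu := exp_mem_unitary_of_mem_skewAdjoint hskew
  have h1 : star (exp (c • A)) * exp (c • A) = 1 := (Unitary.mem_iff.mp hu).1
  have h2 : ‖exp (c • A)‖ * ‖exp (c • A)‖
      = ‖(1 : EuclideanSpace ℂ (Fin n) →L[ℂ] EuclideanSpace ℂ (Fin n))‖ := by
    rw [← CStarRing.norm_star_mul_self, h1]
  have h3 := aux_norm_one_le (n := n)
  nlinarith [norm_nonneg (exp (c • A))]

private lemma aux_star_coeff (t : ℝ) : star (-(t : ℂ) * Complex.I) = -(-(t : ℂ) * Complex.I) := by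
  simp [Complex.ext_iff]

private lemma aux_norm_exp_real
    (A : EuclideanSpace ℂ (Fin n) →L[ℂ] EuclideanSpace ℂ (Fin n))
    (hA : IsSelfAdjoint A) (t : ℝ) :
    ‖exp ((-(t : ℂ) * Complex.I) • A)‖ ≤ 1 :=
  aux_norm_exp_le_one A hA _ (aux_star_coeff t)

private lemma aux_exp_diff_gen {𝔸 : Type*} [NormedRing 𝔸] [NormedAlgebra ℂ 𝔸] [CompleteSpace 𝔸]
    (K K' : 𝔸) (t : ℝ) (ht : 0 ≤ t)
    (hKb : ∀ r : ℝ, ‖exp ((r : ℂ) • K)‖ ≤ 1)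
    (hK'b : ∀ r : ℝ, ‖exp ((r : ℂ) • K')‖ ≤ 1) :
    ‖exp ((t : ℂ) • K) - exp ((t : ℂ) • K')‖ ≤ t * ‖K - K'‖ := by
  have key : ∀ z : ℂ,
      HasDerivAt (fun w : ℂ => exp (((t : ℂ) - w) • K) * exp (w • K'))
        (exp (((t : ℂ) - z) • K) * ((K' - K) * exp (z • K'))) z := by
    intro z
    have hin : HasDerivAt (fun w : ℂ => (t : ℂ) - w) (-1) z := by
      simpa using (hasDerivAt_id z).const_sub (t : ℂ)
    have h1 : HasDerivAt (fun w : ℂ => exp (w • K))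
        (exp (((t : ℂ) - z) • K) * K) ((t : ℂ) - z) :=
      hasDerivAt_exp_smul_const K ((t : ℂ) - z)
    have h1' : HasDerivAt (fun w : ℂ => exp (((t : ℂ) - w) • K))
        ((-1 : ℂ) • (exp (((t : ℂ) - z) • K) * K)) z :=
      HasDerivAt.scomp_of_eq z h1 hin rfl
    have h2 : HasDerivAt (fun w : ℂ => exp (w • K')) (K' * exp (z • K')) z :=
      hasDerivAt_exp_smul_const' K' z
    have hmul := h1'.mul h2
    convert hmul using 1
    · rfl
    simp only [neg_smul, one_smul]
    noncomm_ring
  have hmvt := norm_image_sub_le_of_norm_deriv_le_segment'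
    (f := fun s : ℝ => exp (((t : ℂ) - (s : ℝ)) • K) * exp (((s : ℝ) : ℂ) • K'))
    (f' := fun s : ℝ => exp (((t : ℂ) - (s : ℝ)) • K) * ((K' - K) * exp (((s : ℝ) : ℂ) • K')))
    (a := 0) (b := t) (C := ‖K' - K‖)
    (fun s _ => by
      have hre : HasDerivAt (fun y : ℝ => (y : ℂ)) 1 s := Complex.ofRealCLM.hasDerivAt
      have h := HasDerivAt.scomp_of_eq s (key ((s : ℝ) : ℂ)) hre rfl
      rw [one_smul] at h
      exact h.hasDerivWithinAt)
    (fun s _ => by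
      have e1 : ((t : ℂ) - (s : ℝ)) = ((t - s : ℝ) : ℂ) := by push_cast; ring
      have hX : ‖exp (((t : ℂ) - (s : ℝ)) • K)‖ ≤ 1 := by rw [e1]; exact hKb (t - s)
      have hZ : ‖exp (((s : ℝ) : ℂ) • K')‖ ≤ 1 := hK'b s
      calc ‖exp (((t : ℂ) - (s : ℝ)) • K) * ((K' - K) * exp (((s : ℝ) : ℂ) • K'))‖
          ≤ ‖exp (((t : ℂ) - (s : ℝ)) • K)‖ * ‖(K' - K) * exp (((s : ℝ) : ℂ) • K')‖ :=
            norm_mul_le _ _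
        _ ≤ ‖exp (((t : ℂ) - (s : ℝ)) • K)‖ * (‖K' - K‖ * ‖exp (((s : ℝ) : ℂ) • K')‖) :=
            mul_le_mul_of_nonneg_left (norm_mul_le _ _) (norm_nonneg _)
        _ ≤ 1 * (‖K' - K‖ * 1) :=
            mul_le_mul hX (mul_le_mul_of_nonneg_left hZ (norm_nonneg _))
              (by positivity) one_pos.le
        _ = ‖K' - K‖ := by ring)
    t (Set.right_mem_Icc.mpr ht)
  have h0 : (fun s : ℝ => exp (((t : ℂ) - (s : ℝ)) • K) * exp (((s : ℝ) : ℂ) • K')) 0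
      = exp ((t : ℂ) • K) := by
    simp
  have ht' : (fun s : ℝ => exp (((t : ℂ) - (s : ℝ)) • K) * exp (((s : ℝ) : ℂ) • K')) t
      = exp ((t : ℂ) • K') := by
    simp
  beta_reduce at h0 ht'
  rw [h0, ht', sub_zero] at hmvt
  calc ‖exp ((t : ℂ) • K) - exp ((t : ℂ) • K')‖
      = ‖exp ((t : ℂ) • K') - exp ((t : ℂ) • K)‖ := norm_sub_rev _ _
    _ ≤ ‖K' - K‖ * t := by simpa using hmvt
    _ = t * ‖K' - K‖ := by ring
    _ = t * ‖K - K'‖ := by rw [norm_sub_rev]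


private lemma aux_exp_diff
    (A A' : EuclideanSpace ℂ (Fin n) →L[ℂ] EuclideanSpace ℂ (Fin n))
    (hA : IsSelfAdjoint A) (hA' : IsSelfAdjoint A') (t : ℝ) (ht : 0 ≤ t) :
    ‖exp ((-(t : ℂ) * Complex.I) • A) - exp ((-(t : ℂ) * Complex.I) • A')‖
      ≤ t * ‖A - A'‖ := by
  have hco : ∀ (r : ℝ) (B : EuclideanSpace ℂ (Fin n) →L[ℂ] EuclideanSpace ℂ (Fin n)),
      (r : ℂ) • ((-Complex.I) • B) = (-(r : ℂ) * Complex.I) • B := by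
    intro r B
    rw [smul_smul]
    congr 1
    ring
  have hKb : ∀ r : ℝ, ‖exp ((r : ℂ) • ((-Complex.I) • A))‖ ≤ 1 := by
    intro r; rw [hco]; exact aux_norm_exp_real A hA r
  have hK'b : ∀ r : ℝ, ‖exp ((r : ℂ) • ((-Complex.I) • A'))‖ ≤ 1 := by
    intro r; rw [hco]; exact aux_norm_exp_real A' hA' r
  have h := aux_exp_diff_gen ((-Complex.I) • A) ((-Complex.I) • A') t ht hKb hK'b
  rw [hco, hco] at h
  have e : (-Complex.I) • A - (-Complex.I) • A' = (-Complex.I) • (A - A') :=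
    (smul_sub _ _ _).symm
  rw [e, norm_smul (-Complex.I) (A - A'), norm_neg, Complex.norm_I, one_mul] at h
  exact h

end aux

open scoped InnerProductSpace

set_option maxHeartbeats 1000000 in
/-- If the quantum walk generated by the Hermitian matrix `H` has
time-averaged success probability at least `p` up to time `T`, and `H̃` is a Hermitian matrix
with `‖H - H̃‖ ≤ p/(4T)` in the operator norm, then the walk generated by `H̃` has
time-averaged success probability at least `p/2`. -/
theorem quantum_walk_stability_under_perturbation
    (n : ℕ) (H H' : Matrix (Fin n) (Fin n) ℂ)
    (hH : H.IsHermitian) (hH' : H'.IsHermitian)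
    (a b : Fin n → ℂ)
    (ha : star a ⬝ᵥ a = 1) (hb : star b ⬝ᵥ b = 1)
    (T p : ℝ) (hT : 0 < T) (hp : 0 < p)
    (hlow : (1 / T) * ∫ t in (0:ℝ)..T,
        ‖star b ⬝ᵥ (NormedSpace.exp ((-(t : ℂ) * Complex.I) • H)).mulVec a‖ ^ 2 ≥ p)
    (hclose : ‖Matrix.toEuclideanCLM (𝕜 := ℂ) (H - H')‖ ≤ p / (4 * T)) :
    (1 / T) * ∫ t in (0:ℝ)..T,
        ‖star b ⬝ᵥ (NormedSpace.exp ((-(t : ℂ) * Complex.I) • H')).mulVec a‖ ^ 2 ≥ p / 2 := by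
  classical
  letI : SeminormedRing (Matrix (Fin n) (Fin n) ℂ) := Matrix.linftyOpSemiNormedRing
  letI : NormedRing (Matrix (Fin n) (Fin n) ℂ) := Matrix.linftyOpNormedRing
  letI : NormedAlgebra ℂ (Matrix (Fin n) (Fin n) ℂ) := Matrix.linftyOpNormedAlgebra
  letI : NormedAlgebra ℚ (Matrix (Fin n) (Fin n) ℂ) := NormedAlgebra.restrictScalars ℚ ℂ _
  letI : NormedAlgebra ℚ (EuclideanSpace ℂ (Fin n) →L[ℂ] EuclideanSpace ℂ (Fin n)) :=
    NormedAlgebra.restrictScalars ℚ ℂ _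
  set φ := Matrix.toEuclideanCLM (n := Fin n) (𝕜 := ℂ) with hφ
  have hφcont : Continuous φ :=
    LinearMap.continuous_of_finiteDimensional
      (f := { toFun := φ, map_add' := fun x y => map_add φ x y,
              map_smul' := fun c x => map_smul φ c x })
  have hexp_map : ∀ M : Matrix (Fin n) (Fin n) ℂ,
      φ (NormedSpace.exp M) = NormedSpace.exp (φ M) :=
    fun M => NormedSpace.map_exp φ hφcont M
  set av : EuclideanSpace ℂ (Fin n) := (WithLp.equiv 2 (Fin n → ℂ)).symm a with hav
  set bv : EuclideanSpace ℂ (Fin n) := (WithLp.equiv 2 (Fin n → ℂ)).symm b with hbv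
  have hdot : ∀ M : Matrix (Fin n) (Fin n) ℂ,
      star b ⬝ᵥ M.mulVec a = ⟪bv, φ M av⟫_ℂ := by
    intro M
    rw [hav, hbv, hφ, WithLp.equiv_symm_apply, toEuclideanCLM_toLp,
      EuclideanSpace.inner_toLp_toLp, dotProduct_comm]
  have havn : ‖av‖ = 1 := by
    have h1 : ⟪av, av⟫_ℂ = 1 := by
      rw [hav, WithLp.equiv_symm_apply, EuclideanSpace.inner_toLp_toLp, dotProduct_comm]; exact ha
    have h2 : ⟪av, av⟫_ℂ = ((‖av‖ : ℂ)) ^ 2 := inner_self_eq_norm_sq_to_K av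
    have h3 : (‖av‖ : ℝ) ^ 2 = 1 := by
      have := h1.symm.trans h2
      exact_mod_cast this.symm
    nlinarith [norm_nonneg av]
  have hbvn : ‖bv‖ = 1 := by
    have h1 : ⟪bv, bv⟫_ℂ = 1 := by
      rw [hbv, WithLp.equiv_symm_apply, EuclideanSpace.inner_toLp_toLp, dotProduct_comm]; exact hb
    have h2 : ⟪bv, bv⟫_ℂ = ((‖bv‖ : ℂ)) ^ 2 := inner_self_eq_norm_sq_to_K bv
    have h3 : (‖bv‖ : ℝ) ^ 2 = 1 := by
      have := h1.symm.trans h2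
      exact_mod_cast this.symm
    nlinarith [norm_nonneg bv]
  set A := φ H with hA_def
  set A' := φ H' with hA'_def
  have hA : _root_.IsSelfAdjoint A := hH.isSelfAdjoint.map φ
  have hA' : _root_.IsSelfAdjoint A' := hH'.isSelfAdjoint.map φ
  -- the two amplitude functions
  set x : ℝ → ℂ := fun t =>
    star b ⬝ᵥ (NormedSpace.exp ((-(t : ℂ) * Complex.I) • H)).mulVec a with hxdef
  set y : ℝ → ℂ := fun t =>
    star b ⬝ᵥ (NormedSpace.exp ((-(t : ℂ) * Complex.I) • H')).mulVec a with hydef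
  have hx : ∀ t : ℝ, x t = ⟪bv, NormedSpace.exp ((-(t : ℂ) * Complex.I) • A) av⟫_ℂ := by
    intro t
    rw [hxdef]
    simp only
    rw [hdot, hexp_map, _root_.map_smul]
  have hy : ∀ t : ℝ, y t = ⟪bv, NormedSpace.exp ((-(t : ℂ) * Complex.I) • A') av⟫_ℂ := by
    intro t
    rw [hydef]
    simp only
    rw [hdot, hexp_map, _root_.map_smul]
  -- pointwise bounds
  have hx1 : ∀ t : ℝ, ‖x t‖ ≤ 1 := by
    intro t
    rw [hx]
    calc ‖⟪bv, NormedSpace.exp ((-(t : ℂ) * Complex.I) • A) av⟫_ℂ‖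
        ≤ ‖bv‖ * ‖NormedSpace.exp ((-(t : ℂ) * Complex.I) • A) av‖ := norm_inner_le_norm _ _
      _ ≤ ‖bv‖ * (‖NormedSpace.exp ((-(t : ℂ) * Complex.I) • A)‖ * ‖av‖) :=
          mul_le_mul_of_nonneg_left (ContinuousLinearMap.le_opNorm _ _) (norm_nonneg _)
      _ = ‖NormedSpace.exp ((-(t : ℂ) * Complex.I) • A)‖ := by rw [hbvn, havn]; ring
      _ ≤ 1 := aux_norm_exp_real A hA t
  have hy1 : ∀ t : ℝ, ‖y t‖ ≤ 1 := by
    intro t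
    rw [hy]
    calc ‖⟪bv, NormedSpace.exp ((-(t : ℂ) * Complex.I) • A') av⟫_ℂ‖
        ≤ ‖bv‖ * ‖NormedSpace.exp ((-(t : ℂ) * Complex.I) • A') av‖ := norm_inner_le_norm _ _
      _ ≤ ‖bv‖ * (‖NormedSpace.exp ((-(t : ℂ) * Complex.I) • A')‖ * ‖av‖) :=
          mul_le_mul_of_nonneg_left (ContinuousLinearMap.le_opNorm _ _) (norm_nonneg _)
      _ = ‖NormedSpace.exp ((-(t : ℂ) * Complex.I) • A')‖ := by rw [hbvn, havn]; ring
      _ ≤ 1 := aux_norm_exp_real A' hA' t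
  have hAA' : ‖A - A'‖ ≤ p / (4 * T) := by
    rw [hA_def, hA'_def, ← _root_.map_sub]
    exact hclose
  have hdiff : ∀ t : ℝ, 0 ≤ t → ‖x t - y t‖ ≤ t * (p / (4 * T)) := by
    intro t ht
    rw [hx, hy, ← inner_sub_right]
    have hsub : NormedSpace.exp ((-(t : ℂ) * Complex.I) • A) av -
        NormedSpace.exp ((-(t : ℂ) * Complex.I) • A') av
        = (NormedSpace.exp ((-(t : ℂ) * Complex.I) • A) -
            NormedSpace.exp ((-(t : ℂ) * Complex.I) • A')) av := by
      rw [ContinuousLinearMap.sub_apply]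
    calc ‖⟪bv, NormedSpace.exp ((-(t : ℂ) * Complex.I) • A) av -
          NormedSpace.exp ((-(t : ℂ) * Complex.I) • A') av⟫_ℂ‖
        ≤ ‖bv‖ * ‖NormedSpace.exp ((-(t : ℂ) * Complex.I) • A) av -
            NormedSpace.exp ((-(t : ℂ) * Complex.I) • A') av‖ := norm_inner_le_norm _ _
      _ ≤ ‖bv‖ * (‖NormedSpace.exp ((-(t : ℂ) * Complex.I) • A) -
            NormedSpace.exp ((-(t : ℂ) * Complex.I) • A')‖ * ‖av‖) := by
          rw [hsub]
          exact mul_le_mul_of_nonneg_left (ContinuousLinearMap.le_opNorm _ _) (norm_nonneg _)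
      _ = ‖NormedSpace.exp ((-(t : ℂ) * Complex.I) • A) -
            NormedSpace.exp ((-(t : ℂ) * Complex.I) • A')‖ := by
          rw [hbvn, havn]; ring
      _ ≤ t * ‖A - A'‖ := aux_exp_diff A A' hA hA' t ht
      _ ≤ t * (p / (4 * T)) := mul_le_mul_of_nonneg_left hAA' ht
  have hpt : ∀ t ∈ Set.Icc (0 : ℝ) T, ‖x t‖ ^ 2 - t * (p / (2 * T)) ≤ ‖y t‖ ^ 2 := by
    intro t ht
    obtain ⟨ht0, htT⟩ := ht
    have h1 := hx1 t
    have h2 := hy1 t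
    have h3 := hdiff t ht0
    have h4 : ‖x t‖ - ‖y t‖ ≤ ‖x t - y t‖ := norm_sub_norm_le _ _
    have h5 : 0 ≤ ‖x t‖ := norm_nonneg _
    have h6 : 0 ≤ ‖y t‖ := norm_nonneg _
    have h7 : 0 ≤ ‖x t - y t‖ := norm_nonneg _
    have key2 : ‖x t‖ ^ 2 - ‖y t‖ ^ 2 ≤ 2 * ‖x t - y t‖ := by
      rcases le_or_gt (‖x t‖) (‖y t‖) with h | h
      · nlinarith
      · have e : ‖x t‖ ^ 2 - ‖y t‖ ^ 2 = (‖x t‖ + ‖y t‖) * (‖x t‖ - ‖y t‖) := by ring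
        rw [e]
        have := mul_le_mul (show ‖x t‖ + ‖y t‖ ≤ 2 by linarith)
          (show ‖x t‖ - ‖y t‖ ≤ ‖x t - y t‖ from h4) (by linarith) (by norm_num)
        linarith
    have e2 : 2 * (t * (p / (4 * T))) = t * (p / (2 * T)) := by
      field_simp
      ring
    linarith [key2, h3]
  -- continuity and integrability
  have hxc : Continuous fun t : ℝ => ‖x t‖ ^ 2 := by
    have hc0 : Continuous fun t : ℝ => -(t : ℂ) * Complex.I :=
      (Complex.continuous_ofReal.neg).mul continuous_const
    have hc1 : Continuous fun t : ℝ => (-(t : ℂ) * Complex.I) • A :=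
      hc0.smul continuous_const
    have hc2 : Continuous fun t : ℝ => NormedSpace.exp ((-(t : ℂ) * Complex.I) • A) :=
      NormedSpace.exp_continuous.comp hc1
    have hc3 : Continuous fun t : ℝ =>
        (NormedSpace.exp ((-(t : ℂ) * Complex.I) • A)) av :=
      hc2.clm_apply continuous_const
    have hc4 : Continuous fun t : ℝ =>
        ⟪bv, NormedSpace.exp ((-(t : ℂ) * Complex.I) • A) av⟫_ℂ :=
      continuous_const.inner hc3
    have : (fun t : ℝ => ‖x t‖ ^ 2)
        = fun t : ℝ => ‖⟪bv, NormedSpace.exp ((-(t : ℂ) * Complex.I) • A) av⟫_ℂ‖ ^ 2 := by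
      funext t; rw [hx]
    rw [this]
    exact (hc4.norm).pow 2
  have hyc : Continuous fun t : ℝ => ‖y t‖ ^ 2 := by
    have hc0 : Continuous fun t : ℝ => -(t : ℂ) * Complex.I :=
      (Complex.continuous_ofReal.neg).mul continuous_const
    have hc1 : Continuous fun t : ℝ => (-(t : ℂ) * Complex.I) • A' :=
      hc0.smul continuous_const
    have hc2 : Continuous fun t : ℝ => NormedSpace.exp ((-(t : ℂ) * Complex.I) • A') :=
      NormedSpace.exp_continuous.comp hc1
    have hc3 : Continuous fun t : ℝ =>
        (NormedSpace.exp ((-(t : ℂ) * Complex.I) • A')) av :=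
      hc2.clm_apply continuous_const
    have hc4 : Continuous fun t : ℝ =>
        ⟪bv, NormedSpace.exp ((-(t : ℂ) * Complex.I) • A') av⟫_ℂ :=
      continuous_const.inner hc3
    have : (fun t : ℝ => ‖y t‖ ^ 2)
        = fun t : ℝ => ‖⟪bv, NormedSpace.exp ((-(t : ℂ) * Complex.I) • A') av⟫_ℂ‖ ^ 2 := by
      funext t; rw [hy]
    rw [this]
    exact (hc4.norm).pow 2
  have hix : IntervalIntegrable (fun t : ℝ => ‖x t‖ ^ 2) volume 0 T :=
    hxc.intervalIntegrable 0 T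
  have hiy : IntervalIntegrable (fun t : ℝ => ‖y t‖ ^ 2) volume 0 T :=
    hyc.intervalIntegrable 0 T
  have hilin : IntervalIntegrable (fun t : ℝ => t * (p / (2 * T))) volume 0 T :=
    (continuous_id.mul continuous_const).intervalIntegrable 0 T
  have hmono : ∫ t in (0:ℝ)..T, (‖x t‖ ^ 2 - t * (p / (2 * T)))
      ≤ ∫ t in (0:ℝ)..T, ‖y t‖ ^ 2 := by
    apply intervalIntegral.integral_mono_on (le_of_lt hT) (hix.sub hilin) hiy
    intro t ht
    exact hpt t ht
  have hsplit : ∫ t in (0:ℝ)..T, (‖x t‖ ^ 2 - t * (p / (2 * T)))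
      = (∫ t in (0:ℝ)..T, ‖x t‖ ^ 2) - (T ^ 2 / 2) * (p / (2 * T)) := by
    rw [intervalIntegral.integral_sub hix hilin]
    congr 1
    rw [intervalIntegral.integral_mul_const, integral_id]
    ring
  have hXlow : p * T ≤ ∫ t in (0:ℝ)..T, ‖x t‖ ^ 2 := by
    have := hlow
    rw [ge_iff_le] at this
    have h := mul_le_mul_of_nonneg_right this (le_of_lt hT)
    have e : 1 / T * (∫ t in (0:ℝ)..T, ‖x t‖ ^ 2) * T = ∫ t in (0:ℝ)..T, ‖x t‖ ^ 2 := by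
      field_simp
    rw [e] at h
    exact h
  have hYlow : p / 2 * T ≤ ∫ t in (0:ℝ)..T, ‖y t‖ ^ 2 := by
    have h1 : (∫ t in (0:ℝ)..T, ‖x t‖ ^ 2) - (T ^ 2 / 2) * (p / (2 * T))
        ≤ ∫ t in (0:ℝ)..T, ‖y t‖ ^ 2 := by
      rw [← hsplit]; exact hmono
    have h2 : (T ^ 2 / 2) * (p / (2 * T)) = p * T / 4 := by
      field_simp
      ring
    nlinarith
  rw [ge_iff_le]
  calc p / 2 = (1 / T) * (p / 2 * T) := by field_simp
    _ ≤ (1 / T) * ∫ t in (0:ℝ)..T, ‖y t‖ ^ 2 := by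
        apply mul_le_mul_of_nonneg_left hYlow
        positivity
end
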